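/- arXiv:2006.03518 — 6 statements merged into one kernel-verified Lean document; each statement's English description precedes it below -/
import Mathlib

section
/- Uniqueness for the discrete time-fractional MFG scheme: Suppose g is a numerical Hamiltonian that is C¹ in q, satisfies (G1) (nonincreasing in q₁ and q₃, nondecreasing in q₂ and q₄) and (G4) (q ↦ g(x_{i,j},q) convex for each (i,j)), and suppose f_h maps grid functions to grid functions and is strictly monotone: (f_h[M] − f_h[M̄], M − M̄)₂ ≥ 0 for all M, M̄ ∈ 𝒦_h, with equality only if M = M̄. If (U, M) = ((Uⁿ)ₙ₌₀ᴺ, (Mⁿ)ₙ₌₀ᴺ) and (Ũ, M̃) are two solutions of the discrete system with the same terminal datum Uᴺ = Ũᴺ, the same initial datum M⁰ = M̃⁰, and Mⁿ, M̃ⁿ ∈ 𝒦_h for all n, then Uⁿ = Ũⁿ and Mⁿ = M̃ⁿ for all n = 0,…,N. -/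
open Real Finset

noncomputable section

/-- forward L1 coefficients `c_k^n` -/
def cF (α : ℝ) (n k : ℕ) : ℝ :=
  if k = 0 then (n : ℝ) ^ (1 - α) - ((n : ℝ) - 1) ^ (1 - α)
  else 2 * ((n : ℝ) - k) ^ (1 - α) - ((n : ℝ) + 1 - k) ^ (1 - α) - ((n : ℝ) - 1 - k) ^ (1 - α)

/-- backward L1 coefficients `c̄_n^k` (with horizon `N`) -/
def cB (α : ℝ) (N n k : ℕ) : ℝ :=
  if k = N then ((N : ℝ) - n) ^ (1 - α) - ((N : ℝ) - 1 - n) ^ (1 - α)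
  else 2 * ((k : ℝ) - n) ^ (1 - α) - ((k : ℝ) + 1 - n) ^ (1 - α) - ((k : ℝ) - 1 - n) ^ (1 - α)

/-- `ρ_α = Γ(2-α) Δt^α` -/
def rhoA (α Δt : ℝ) : ℝ := Real.Gamma (2 - α) * Δt ^ α

/-- discrete forward Caputo derivative (L1 scheme) -/
def DF (α Δt : ℝ) (w : ℕ → ℝ) (n : ℕ) : ℝ :=
  (rhoA α Δt)⁻¹ * (w n - ∑ k ∈ Finset.range n, cF α n k * w k)

/-- discrete backward Caputo derivative (L1 scheme) -/
def DB (α Δt : ℝ) (N : ℕ) (w : ℕ → ℝ) (n : ℕ) : ℝ :=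
  (rhoA α Δt)⁻¹ * (w n - ∑ k ∈ Finset.Icc (n + 1) N, cB α N n k * w k)

/-- grid functions on the uniform periodic grid of the 2-torus -/
abbrev GridFun (Nh : ℕ) := ZMod Nh → ZMod Nh → ℝ

/-- mesh step `h = 1/N_h` -/
def hstep (Nh : ℕ) : ℝ := (Nh : ℝ)⁻¹

/-- grid point `x_{i,j} = (i h, j h)` -/
def gridPt (Nh : ℕ) (i j : ZMod Nh) : ℝ × ℝ :=
  ((i.val : ℝ) * hstep Nh, (j.val : ℝ) * hstep Nh)

/-- forward difference in the first variable -/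
def D1p (Nh : ℕ) (U : GridFun Nh) (i j : ZMod Nh) : ℝ := (U (i + 1) j - U i j) / hstep Nh

/-- forward difference in the second variable -/
def D2p (Nh : ℕ) (U : GridFun Nh) (i j : ZMod Nh) : ℝ := (U i (j + 1) - U i j) / hstep Nh

/-- the discrete gradient `[D_h U]_{i,j} ∈ ℝ⁴` -/
def Dh (Nh : ℕ) (U : GridFun Nh) (i j : ZMod Nh) : Fin 4 → ℝ :=
  ![D1p Nh U i j, D1p Nh U (i - 1) j, D2p Nh U i j, D2p Nh U i (j - 1)]

/-- five point discrete Laplacian -/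
def lapl (Nh : ℕ) (U : GridFun Nh) (i j : ZMod Nh) : ℝ :=
  -(4 * U i j - U (i + 1) j - U (i - 1) j - U i (j + 1) - U i (j - 1)) / (hstep Nh) ^ 2

/-- the scalar product `(U,V)₂ = h² Σ_{i,j} U_{i,j} V_{i,j}` -/
def inner2 (Nh : ℕ) [NeZero Nh] (U V : GridFun Nh) : ℝ :=
  (hstep Nh) ^ 2 * ∑ i : ZMod Nh, ∑ j : ZMod Nh, U i j * V i j

/-- the set `𝒦_h` of discrete probability measures -/
def Kh (Nh : ℕ) [NeZero Nh] : Set (GridFun Nh) :=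
  {M | (∀ i j, 0 ≤ M i j) ∧ inner2 Nh M (fun _ _ => 1) = 1}

/-- partial derivative `∂_{q_k} g(q)` -/
def gq (g : (Fin 4 → ℝ) → ℝ) (q : Fin 4 → ℝ) (k : Fin 4) : ℝ :=
  fderiv ℝ g q (Pi.single k 1)

/-- (G1): `g` nonincreasing in `q₁, q₃` and nondecreasing in `q₂, q₄` -/
def G1 (g : (Fin 4 → ℝ) → ℝ) : Prop :=
  (∀ q : Fin 4 → ℝ, Antitone fun s => g (Function.update q 0 s)) ∧
  (∀ q : Fin 4 → ℝ, Monotone fun s => g (Function.update q 1 s)) ∧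
  (∀ q : Fin 4 → ℝ, Antitone fun s => g (Function.update q 2 s)) ∧
  (∀ q : Fin 4 → ℝ, Monotone fun s => g (Function.update q 3 s))

/-- the discrete transport operator `𝓑_{i,j}(U,M)` -/
def Bop (Nh : ℕ) (g : ZMod Nh → ZMod Nh → (Fin 4 → ℝ) → ℝ) (U M : GridFun Nh)
    (i j : ZMod Nh) : ℝ :=
  (hstep Nh)⁻¹ *
    (M i j * gq (g i j) (Dh Nh U i j) 0 - M (i - 1) j * gq (g (i - 1) j) (Dh Nh U (i - 1) j) 0
     + M (i + 1) j * gq (g (i + 1) j) (Dh Nh U (i + 1) j) 1 - M i j * gq (g i j) (Dh Nh U i j) 1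
     + M i j * gq (g i j) (Dh Nh U i j) 2 - M i (j - 1) * gq (g i (j - 1)) (Dh Nh U i (j - 1)) 2
     + M i (j + 1) * gq (g i (j + 1)) (Dh Nh U i (j + 1)) 3 - M i j * gq (g i j) (Dh Nh U i j) 3)

section Aux
variable {Nh : ℕ} [NeZero Nh]

lemma hstep_pos (Nh : ℕ) [NeZero Nh] : 0 < hstep Nh := by
  have : 0 < (Nh : ℝ) := by exact_mod_cast Nat.pos_of_ne_zero (NeZero.ne Nh)
  simpa [hstep] using inv_pos.2 this

lemma rhoA_pos {α Δt : ℝ} (hα : α ∈ Set.Ioo (0:ℝ) 1) (hΔt : 0 < Δt) : 0 < rhoA α Δt := by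
  have h1 : (0:ℝ) < 2 - α := by linarith [hα.2]
  exact mul_pos (Real.Gamma_pos_of_pos h1) (Real.rpow_pos_of_pos hΔt α)

lemma sum2_shift (f : ZMod Nh → ZMod Nh → ℝ) (a b : ZMod Nh) :
    ∑ i : ZMod Nh, ∑ j : ZMod Nh, f (i + a) (j + b) = ∑ i : ZMod Nh, ∑ j : ZMod Nh, f i j :=
  calc ∑ i : ZMod Nh, ∑ j : ZMod Nh, f (i + a) (j + b)
      = ∑ i : ZMod Nh, ∑ j : ZMod Nh, f i (j + b) :=
        Fintype.sum_equiv (Equiv.addRight a) _ _ (fun _ => rfl)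
    _ = ∑ i : ZMod Nh, ∑ j : ZMod Nh, f i j :=
        Finset.sum_congr rfl fun i _ => Fintype.sum_equiv (Equiv.addRight b) _ _ (fun _ => rfl)

end Aux
section Calc1

lemma pi4_decomp (v : Fin 4 → ℝ) : v = ∑ k : Fin 4, v k • (Pi.single k 1 : Fin 4 → ℝ) := by
  funext j
  simp [Pi.single_apply, Finset.sum_apply]

lemma fderiv_pi4_apply {g : (Fin 4 → ℝ) → ℝ} (q v : Fin 4 → ℝ) :
    fderiv ℝ g q v = ∑ k : Fin 4, v k * gq g q k := by
  conv_lhs => rw [pi4_decomp v]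
  rw [map_sum]
  exact Finset.sum_congr rfl fun k _ => by rw [map_smul]; rfl

lemma antitone_hasDerivAt_nonpos {φ : ℝ → ℝ} {d x : ℝ} (h : Antitone φ)
    (hd : HasDerivAt φ d x) : d ≤ 0 := by
  have hsub : Set.Ioi x ⊆ {x}ᶜ := fun y hy => ne_of_gt hy
  have ht : Filter.Tendsto (slope φ x) (nhdsWithin x (Set.Ioi x)) (nhds d) :=
    (hasDerivAt_iff_tendsto_slope.1 hd).mono_left (nhdsWithin_mono x hsub)
  refine le_of_tendsto ht ?_
  filter_upwards [self_mem_nhdsWithin] with y hy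
  have hxy : x < y := hy
  have h1 : φ y - φ x ≤ 0 := by linarith [h hxy.le]
  rw [slope_def_field, div_eq_inv_mul]
  have : (0:ℝ) ≤ (y - x)⁻¹ := inv_nonneg.2 (by linarith)
  exact mul_nonpos_of_nonneg_of_nonpos this h1

lemma monotone_hasDerivAt_nonneg {φ : ℝ → ℝ} {d x : ℝ} (h : Monotone φ)
    (hd : HasDerivAt φ d x) : 0 ≤ d := by
  have := antitone_hasDerivAt_nonpos (h.neg) hd.neg
  linarith

lemma hasDerivAt_update4 (g : (Fin 4 → ℝ) → ℝ) (hg : ContDiff ℝ 1 g) (q : Fin 4 → ℝ) (k : Fin 4) :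
    HasDerivAt (fun s => g (Function.update q k s)) (gq g q k) (q k) := by
  have hc : ∀ s : ℝ, Function.update q k s = q + (s - q k) • (Pi.single k 1 : Fin 4 → ℝ) := by
    intro s; funext j
    by_cases hj : j = k
    · subst hj; simp
    · simp [Function.update_of_ne hj, Pi.single_apply, hj]
  have h1 : HasDerivAt (fun s : ℝ => q + (s - q k) • (Pi.single k 1 : Fin 4 → ℝ))
      (Pi.single k (1:ℝ)) (q k) := by
    have hid : HasDerivAt (fun s : ℝ => s - q k) 1 (q k) := (hasDerivAt_id _).sub_const _
    simpa using (hid.smul_const (Pi.single k 1 : Fin 4 → ℝ)).const_add q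
  have hc' : HasDerivAt (fun s : ℝ => Function.update q k s) (Pi.single k (1:ℝ)) (q k) := by
    simp only [hc]; exact h1
  have h2 : HasFDerivAt g (fderiv ℝ g q) ((fun s : ℝ => Function.update q k s) (q k)) := by
    simp only [Function.update_eq_self]
    exact (hg.differentiable one_ne_zero q).hasFDerivAt
  exact h2.comp_hasDerivAt (q k) hc'

lemma gq_nonpos_of_antitone {g : (Fin 4 → ℝ) → ℝ} (hg : ContDiff ℝ 1 g) {k : Fin 4}
    (h : ∀ q : Fin 4 → ℝ, Antitone fun s => g (Function.update q k s)) (q : Fin 4 → ℝ) :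
    gq g q k ≤ 0 :=
  antitone_hasDerivAt_nonpos (h q) (hasDerivAt_update4 g hg q k)

lemma gq_nonneg_of_monotone {g : (Fin 4 → ℝ) → ℝ} (hg : ContDiff ℝ 1 g) {k : Fin 4}
    (h : ∀ q : Fin 4 → ℝ, Monotone fun s => g (Function.update q k s)) (q : Fin 4 → ℝ) :
    0 ≤ gq g q k :=
  monotone_hasDerivAt_nonneg (h q) (hasDerivAt_update4 g hg q k)

lemma convex_grad {g : (Fin 4 → ℝ) → ℝ} (hg : ContDiff ℝ 1 g)
    (hc : ConvexOn ℝ Set.univ g) (x y : Fin 4 → ℝ) :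
    g x + fderiv ℝ g x (y - x) ≤ g y := by
  have hφconv : ConvexOn ℝ Set.univ (fun t : ℝ => g (AffineMap.lineMap x y t)) := by
    have := hc.comp_affineMap (AffineMap.lineMap x y (k := ℝ))
    rw [Set.preimage_univ] at this
    exact this
  have hφd : HasDerivAt (fun t : ℝ => g (AffineMap.lineMap x y t)) (fderiv ℝ g x (y - x)) 0 := by
    have h1 : HasDerivAt (fun t : ℝ => AffineMap.lineMap x y t) (y - x) 0 := by
      have h0 : HasDerivAt (fun t : ℝ => t • (y - x) + x) (y - x) 0 := by
        simpa using ((hasDerivAt_id (0:ℝ)).smul_const (y - x)).add_const x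
      simpa [AffineMap.lineMap_apply, vsub_eq_sub, vadd_eq_add] using h0
    have h2 : HasFDerivAt g (fderiv ℝ g (AffineMap.lineMap x y (0:ℝ)))
        (AffineMap.lineMap x y (0:ℝ)) := (hg.differentiable one_ne_zero _).hasFDerivAt
    have h3 := h2.comp_hasDerivAt 0 h1
    rw [AffineMap.lineMap_apply_zero] at h3
    exact h3
  have hsl := hφconv.deriv_le_slope (Set.mem_univ (0:ℝ)) (Set.mem_univ (1:ℝ)) one_pos
    hφd.differentiableAt
  rw [slope_def_field, hφd.deriv] at hsl
  simp only [AffineMap.lineMap_apply_zero, AffineMap.lineMap_apply_one] at hsl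
  have : fderiv ℝ g x (y - x) ≤ g y - g x := by
    have h10 : (1:ℝ) - 0 = 1 := by norm_num
    rw [h10] at hsl
    simpa using hsl
  linarith

end Calc1
section Time

lemma cB_eq_cF {α : ℝ} {N n k : ℕ} (hk : k ≠ N) : cB α N n k = cF α (k + 1) (n + 1) := by
  rw [cB, cF, if_neg hk, if_neg (Nat.succ_ne_zero n)]
  push_cast
  ring_nf

lemma time_cancel (α Δt : ℝ) (N : ℕ) (v r : ℕ → ℝ) (hv : v N = 0) (hr : r 0 = 0) :
    ∑ n ∈ Finset.range N, (DB α Δt N v n * r (n + 1) - DF α Δt r (n + 1) * v n) = 0 := by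
  simp only [DB, DF]
  have hsummand : ∀ n, (rhoA α Δt)⁻¹ * (v n - ∑ k ∈ Finset.Icc (n + 1) N, cB α N n k * v k) * r (n + 1)
      - (rhoA α Δt)⁻¹ * (r (n+1) - ∑ k ∈ Finset.range (n+1), cF α (n+1) k * r k) * v n
      = (rhoA α Δt)⁻¹ * ((∑ k ∈ Finset.range (n+1), cF α (n+1) k * r k) * v n
        - (∑ k ∈ Finset.Icc (n + 1) N, cB α N n k * v k) * r (n + 1)) := fun n => by ring
  simp only [hsummand]
  rw [← Finset.mul_sum, Finset.sum_sub_distrib]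
  -- B - A with
  have hA : ∀ n ∈ Finset.range N,
      (∑ k ∈ Finset.Icc (n + 1) N, cB α N n k * v k) * r (n + 1)
      = ∑ k ∈ Finset.range N, (if n + 1 ≤ k then cB α N n k * v k * r (n + 1) else 0) := by
    intro n hn
    rw [Finset.mem_range] at hn
    rw [Finset.sum_mul]
    rw [show Finset.Icc (n+1) N = Finset.Ico (n+1) (N+1) by rw [Finset.Ico_add_one_right_eq_Icc]]
    rw [Finset.sum_Ico_succ_top (by omega : n + 1 ≤ N), hv, mul_zero, zero_mul, add_zero]
    rw [show Finset.Ico (n+1) N = Finset.filter (fun k => n + 1 ≤ k) (Finset.range N) by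
      ext k; simp only [Finset.mem_Ico, Finset.mem_filter, Finset.mem_range]; omega]
    rw [Finset.sum_filter]
  have hB : ∀ n ∈ Finset.range N,
      (∑ k ∈ Finset.range (n+1), cF α (n+1) k * r k) * v n
      = ∑ k ∈ Finset.range N, (if k ≤ n ∧ 1 ≤ k then cF α (n+1) k * r k * v n else 0) := by
    intro n hn
    rw [Finset.mem_range] at hn
    rw [Finset.sum_mul]
    rw [show Finset.range (n+1) = insert 0 (Finset.Icc 1 n) by
      ext k; simp only [Finset.mem_range, Finset.mem_insert, Finset.mem_Icc]; omega]
    rw [Finset.sum_insert (by simp)]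
    rw [hr, mul_zero, zero_mul, zero_add]
    rw [show Finset.Icc 1 n = Finset.filter (fun k => k ≤ n ∧ 1 ≤ k) (Finset.range N) by
      ext k; simp only [Finset.mem_Icc, Finset.mem_filter, Finset.mem_range]; omega]
    rw [Finset.sum_filter]
  rw [Finset.sum_congr rfl hA, Finset.sum_congr rfl hB]
  suffices hfin : ∑ n ∈ Finset.range N, ∑ k ∈ Finset.range N,
        (if k ≤ n ∧ 1 ≤ k then cF α (n+1) k * r k * v n else 0)
      = ∑ n ∈ Finset.range N, ∑ k ∈ Finset.range N,
        (if n + 1 ≤ k then cB α N n k * v k * r (n + 1) else 0) by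
    rw [hfin, sub_self, mul_zero]
  -- reindex the A side: m = n + 1
  have hA2 : ∑ n ∈ Finset.range N, ∑ k ∈ Finset.range N,
        (if n + 1 ≤ k then cB α N n k * v k * r (n + 1) else 0)
      = ∑ m ∈ Finset.range N, ∑ k ∈ Finset.range N,
        (if m ≤ k ∧ 1 ≤ m then cB α N (m - 1) k * v k * r m else 0) := by
    rcases Nat.eq_zero_or_pos N with hN | hN
    · simp [hN]
    obtain ⟨P, rfl⟩ : ∃ P, N = P + 1 := ⟨N - 1, by omega⟩
    conv_lhs => rw [Finset.sum_range_succ]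
    conv_rhs => rw [Finset.sum_range_succ']
    have hfP : ∑ k ∈ Finset.range (P+1),
        (if P + 1 ≤ k then cB α (P+1) P k * v k * r (P + 1) else 0) = 0 := by
      apply Finset.sum_eq_zero; intro k hk
      rw [Finset.mem_range] at hk
      rw [if_neg (by omega)]
    have hg0 : ∑ k ∈ Finset.range (P+1),
        (if (0:ℕ) ≤ k ∧ 1 ≤ (0:ℕ) then cB α (P+1) (0 - 1) k * v k * r 0 else 0) = 0 := by
      apply Finset.sum_eq_zero; intro k _; rw [if_neg (by omega)]
    rw [hfP, hg0, add_zero, add_zero]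
    refine Finset.sum_congr rfl fun n hn => Finset.sum_congr rfl fun k hk => ?_
    by_cases hc : n + 1 ≤ k
    · rw [if_pos hc, if_pos ⟨hc, by omega⟩, show n + 1 - 1 = n from rfl]
    · rw [if_neg hc, if_neg (by omega)]
  rw [hA2, Finset.sum_comm]
  refine Finset.sum_congr rfl fun a ha => Finset.sum_congr rfl fun b hb => ?_
  rw [Finset.mem_range] at ha hb
  by_cases hc : a ≤ b ∧ 1 ≤ a
  · rw [if_pos hc, if_pos hc]
    rw [cB_eq_cF (by omega : b ≠ N), show a - 1 + 1 = a by omega]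
    ring
  · rw [if_neg hc, if_neg hc]

end Time
section Space
variable {Nh : ℕ} [NeZero Nh]

lemma shiftR (F : ZMod Nh → ZMod Nh → ℝ) :
    ∑ i : ZMod Nh, ∑ j : ZMod Nh, F (i + 1) j = ∑ i : ZMod Nh, ∑ j : ZMod Nh, F i j := by
  simpa using sum2_shift F 1 0

lemma shiftL (F : ZMod Nh → ZMod Nh → ℝ) :
    ∑ i : ZMod Nh, ∑ j : ZMod Nh, F (i - 1) j = ∑ i : ZMod Nh, ∑ j : ZMod Nh, F i j := by
  have := sum2_shift F (-1) 0
  simpa [sub_eq_add_neg] using this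

lemma shiftU (F : ZMod Nh → ZMod Nh → ℝ) :
    ∑ i : ZMod Nh, ∑ j : ZMod Nh, F i (j + 1) = ∑ i : ZMod Nh, ∑ j : ZMod Nh, F i j := by
  simpa using sum2_shift F 0 1

lemma shiftD (F : ZMod Nh → ZMod Nh → ℝ) :
    ∑ i : ZMod Nh, ∑ j : ZMod Nh, F i (j - 1) = ∑ i : ZMod Nh, ∑ j : ZMod Nh, F i j := by
  have := sum2_shift F 0 (-1)
  simpa [sub_eq_add_neg] using this

lemma lapl_expand (A B : GridFun Nh) :
    ∑ i : ZMod Nh, ∑ j : ZMod Nh, lapl Nh A i j * B i j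
    = ((∑ i : ZMod Nh, ∑ j : ZMod Nh, A (i+1) j * B i j)
      + (∑ i : ZMod Nh, ∑ j : ZMod Nh, A (i-1) j * B i j)
      + (∑ i : ZMod Nh, ∑ j : ZMod Nh, A i (j+1) * B i j)
      + (∑ i : ZMod Nh, ∑ j : ZMod Nh, A i (j-1) * B i j)
      - 4 * ∑ i : ZMod Nh, ∑ j : ZMod Nh, A i j * B i j) / (hstep Nh) ^ 2 := by
  have h1 : ∀ i j : ZMod Nh, lapl Nh A i j * B i j
      = (A (i+1) j * B i j + A (i-1) j * B i j + A i (j+1) * B i j + A i (j-1) * B i j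
        - 4 * (A i j * B i j)) / (hstep Nh) ^ 2 := by
    intro i j; rw [lapl]; ring
  simp only [h1]
  simp only [← Finset.sum_div]
  congr 1
  simp only [Finset.sum_add_distrib, Finset.sum_sub_distrib, ← Finset.mul_sum]

lemma lapl_symm (A B : GridFun Nh) :
    ∑ i : ZMod Nh, ∑ j : ZMod Nh, lapl Nh A i j * B i j
    = ∑ i : ZMod Nh, ∑ j : ZMod Nh, lapl Nh B i j * A i j := by
  rw [lapl_expand, lapl_expand]
  have e1 : ∑ i : ZMod Nh, ∑ j : ZMod Nh, B (i+1) j * A i j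
      = ∑ i : ZMod Nh, ∑ j : ZMod Nh, A (i-1) j * B i j := by
    have := shiftL (fun i j => B (i+1) j * A i j)
    simp only [sub_add_cancel] at this
    rw [← this]
    exact Finset.sum_congr rfl fun i _ => Finset.sum_congr rfl fun j _ => by ring
  have e2 : ∑ i : ZMod Nh, ∑ j : ZMod Nh, B (i-1) j * A i j
      = ∑ i : ZMod Nh, ∑ j : ZMod Nh, A (i+1) j * B i j := by
    have := shiftR (fun i j => B (i-1) j * A i j)
    simp only [add_sub_cancel_right] at this
    rw [← this]
    exact Finset.sum_congr rfl fun i _ => Finset.sum_congr rfl fun j _ => by ring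
  have e3 : ∑ i : ZMod Nh, ∑ j : ZMod Nh, B i (j+1) * A i j
      = ∑ i : ZMod Nh, ∑ j : ZMod Nh, A i (j-1) * B i j := by
    have := shiftD (fun i j => B i (j+1) * A i j)
    simp only [sub_add_cancel] at this
    rw [← this]
    exact Finset.sum_congr rfl fun i _ => Finset.sum_congr rfl fun j _ => by ring
  have e4 : ∑ i : ZMod Nh, ∑ j : ZMod Nh, B i (j-1) * A i j
      = ∑ i : ZMod Nh, ∑ j : ZMod Nh, A i (j+1) * B i j := by
    have := shiftU (fun i j => B i (j-1) * A i j)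
    simp only [add_sub_cancel_right] at this
    rw [← this]
    exact Finset.sum_congr rfl fun i _ => Finset.sum_congr rfl fun j _ => by ring
  rw [e1, e2, e3, e4]
  have e0 : ∑ i : ZMod Nh, ∑ j : ZMod Nh, B i j * A i j
      = ∑ i : ZMod Nh, ∑ j : ZMod Nh, A i j * B i j :=
    Finset.sum_congr rfl fun i _ => Finset.sum_congr rfl fun j _ => by ring
  rw [e0]
  ring

end Space
section Transport
variable {Nh : ℕ} [NeZero Nh]

lemma quad_dual (P Q R S W : GridFun Nh) :
    ∑ i : ZMod Nh, ∑ j : ZMod Nh, (hstep Nh)⁻¹ *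
      (P i j - P (i-1) j + Q (i+1) j - Q i j + R i j - R i (j-1) + S i (j+1) - S i j) * W i j
    = - ∑ i : ZMod Nh, ∑ j : ZMod Nh, (hstep Nh)⁻¹ *
      (P i j * (W (i+1) j - W i j) + Q i j * (W i j - W (i-1) j)
        + R i j * (W i (j+1) - W i j) + S i j * (W i j - W i (j-1))) := by
  have f2 : ∑ i : ZMod Nh, ∑ j : ZMod Nh, P (i-1) j * W i j
      = ∑ i : ZMod Nh, ∑ j : ZMod Nh, P i j * W (i+1) j := by
    have := shiftL (fun i j => P i j * W (i+1) j)
    simp only [sub_add_cancel] at this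
    exact this
  have f3 : ∑ i : ZMod Nh, ∑ j : ZMod Nh, Q (i+1) j * W i j
      = ∑ i : ZMod Nh, ∑ j : ZMod Nh, Q i j * W (i-1) j := by
    have := shiftR (fun i j => Q i j * W (i-1) j)
    simp only [add_sub_cancel_right] at this
    exact this
  have f6 : ∑ i : ZMod Nh, ∑ j : ZMod Nh, R i (j-1) * W i j
      = ∑ i : ZMod Nh, ∑ j : ZMod Nh, R i j * W i (j+1) := by
    have := shiftD (fun i j => R i j * W i (j+1))
    simp only [sub_add_cancel] at this
    exact this
  have f7 : ∑ i : ZMod Nh, ∑ j : ZMod Nh, S i (j+1) * W i j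
      = ∑ i : ZMod Nh, ∑ j : ZMod Nh, S i j * W i (j-1) := by
    have := shiftU (fun i j => S i j * W i (j-1))
    simp only [add_sub_cancel_right] at this
    exact this
  have hl : ∀ i j : ZMod Nh, (hstep Nh)⁻¹ *
      (P i j - P (i-1) j + Q (i+1) j - Q i j + R i j - R i (j-1) + S i (j+1) - S i j) * W i j
      = (hstep Nh)⁻¹ * ((P i j * W i j - P (i-1) j * W i j) + (Q (i+1) j * W i j - Q i j * W i j)
        + (R i j * W i j - R i (j-1) * W i j) + (S i (j+1) * W i j - S i j * W i j)) :=
    fun i j => by ring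
  have hr : ∀ i j : ZMod Nh, (hstep Nh)⁻¹ *
      (P i j * (W (i+1) j - W i j) + Q i j * (W i j - W (i-1) j)
        + R i j * (W i (j+1) - W i j) + S i j * (W i j - W i (j-1)))
      = (hstep Nh)⁻¹ * ((P i j * W (i+1) j - P i j * W i j) + (Q i j * W i j - Q i j * W (i-1) j)
        + (R i j * W i (j+1) - R i j * W i j) + (S i j * W i j - S i j * W i (j-1))) :=
    fun i j => by ring
  simp only [hl, hr, ← Finset.mul_sum]
  simp only [Finset.sum_add_distrib, Finset.sum_sub_distrib]
  rw [f2, f3, f6, f7]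
  ring

lemma Bop_dual (g : ZMod Nh → ZMod Nh → (Fin 4 → ℝ) → ℝ) (U M W : GridFun Nh) :
    ∑ i : ZMod Nh, ∑ j : ZMod Nh, Bop Nh g U M i j * W i j
    = - ∑ i : ZMod Nh, ∑ j : ZMod Nh,
        M i j * ∑ k : Fin 4, gq (g i j) (Dh Nh U i j) k * Dh Nh W i j k := by
  have hstep_ne : hstep Nh ≠ 0 := ne_of_gt (hstep_pos Nh)
  have hB := quad_dual (Nh := Nh)
    (fun i j => M i j * gq (g i j) (Dh Nh U i j) 0)
    (fun i j => M i j * gq (g i j) (Dh Nh U i j) 1)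
    (fun i j => M i j * gq (g i j) (Dh Nh U i j) 2)
    (fun i j => M i j * gq (g i j) (Dh Nh U i j) 3) W
  have hBop : ∀ i j : ZMod Nh, Bop Nh g U M i j * W i j
      = (hstep Nh)⁻¹ *
        (M i j * gq (g i j) (Dh Nh U i j) 0 - M (i-1) j * gq (g (i-1) j) (Dh Nh U (i-1) j) 0
          + M (i+1) j * gq (g (i+1) j) (Dh Nh U (i+1) j) 1 - M i j * gq (g i j) (Dh Nh U i j) 1
          + M i j * gq (g i j) (Dh Nh U i j) 2 - M i (j-1) * gq (g i (j-1)) (Dh Nh U i (j-1)) 2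
          + M i (j+1) * gq (g i (j+1)) (Dh Nh U i (j+1)) 3 - M i j * gq (g i j) (Dh Nh U i j) 3)
        * W i j := fun i j => by rw [Bop]
  simp only [hBop]
  rw [hB]
  congr 1
  refine Finset.sum_congr rfl fun i _ => Finset.sum_congr rfl fun j _ => ?_
  rw [Fin.sum_univ_four]
  have hD0 : Dh Nh W i j 0 = (W (i+1) j - W i j) * (hstep Nh)⁻¹ := by
    show D1p Nh W i j = _
    rw [D1p, div_eq_mul_inv]
  have hD1 : Dh Nh W i j 1 = (W i j - W (i-1) j) * (hstep Nh)⁻¹ := by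
    show D1p Nh W (i-1) j = _
    rw [D1p, div_eq_mul_inv, sub_add_cancel]
  have hD2 : Dh Nh W i j 2 = (W i (j+1) - W i j) * (hstep Nh)⁻¹ := by
    show D2p Nh W i j = _
    rw [D2p, div_eq_mul_inv]
  have hD3 : Dh Nh W i j 3 = (W i j - W i (j-1)) * (hstep Nh)⁻¹ := by
    show D2p Nh W i (j-1) = _
    rw [D2p, div_eq_mul_inv, sub_add_cancel]
  rw [hD0, hD1, hD2, hD3]
  ring

end Transport
section SpatialKey
variable {Nh : ℕ} [NeZero Nh]

/-- pointwise difference of grid functions -/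
def gsub {Nh : ℕ} (X Y : GridFun Nh) : GridFun Nh := fun i j => X i j - Y i j

lemma lapl_gsub (X Y : GridFun Nh) (i j : ZMod Nh) :
    lapl Nh (gsub X Y) i j = lapl Nh X i j - lapl Nh Y i j := by
  simp only [lapl, gsub]; ring

lemma lapl_cancel (A A' B B' : GridFun Nh) :
    ∑ i : ZMod Nh, ∑ j : ZMod Nh, (lapl Nh A i j - lapl Nh A' i j) * (B i j - B' i j)
    = ∑ i : ZMod Nh, ∑ j : ZMod Nh, (lapl Nh B i j - lapl Nh B' i j) * (A i j - A' i j) := by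
  have h1 : ∑ i : ZMod Nh, ∑ j : ZMod Nh, (lapl Nh A i j - lapl Nh A' i j) * (B i j - B' i j)
      = ∑ i : ZMod Nh, ∑ j : ZMod Nh, lapl Nh (gsub A A') i j * gsub B B' i j :=
    Finset.sum_congr rfl fun i _ => Finset.sum_congr rfl fun j _ => by
      rw [lapl_gsub]; rfl
  have h2 : ∑ i : ZMod Nh, ∑ j : ZMod Nh, (lapl Nh B i j - lapl Nh B' i j) * (A i j - A' i j)
      = ∑ i : ZMod Nh, ∑ j : ZMod Nh, lapl Nh (gsub B B') i j * gsub A A' i j :=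
    Finset.sum_congr rfl fun i _ => Finset.sum_congr rfl fun j _ => by
      rw [lapl_gsub]; rfl
  rw [h1, h2, lapl_symm]

lemma Dh_gsub (X Y : GridFun Nh) (i j : ZMod Nh) (k : Fin 4) :
    Dh Nh (gsub X Y) i j k = Dh Nh X i j k - Dh Nh Y i j k := by
  fin_cases k
  · show D1p Nh (gsub X Y) i j = D1p Nh X i j - D1p Nh Y i j
    simp only [D1p, gsub]; ring
  · show D1p Nh (gsub X Y) (i-1) j = D1p Nh X (i-1) j - D1p Nh Y (i-1) j
    simp only [D1p, gsub]; ring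
  · show D2p Nh (gsub X Y) i j = D2p Nh X i j - D2p Nh Y i j
    simp only [D2p, gsub]; ring
  · show D2p Nh (gsub X Y) i (j-1) = D2p Nh X i (j-1) - D2p Nh Y i (j-1)
    simp only [D2p, gsub]; ring

lemma spatial_key (g : ZMod Nh → ZMod Nh → (Fin 4 → ℝ) → ℝ)
    (hgC1 : ∀ i j, ContDiff ℝ 1 (g i j)) (hg4 : ∀ i j, ConvexOn ℝ Set.univ (g i j))
    (U U' M M' : GridFun Nh) (hM : ∀ i j, 0 ≤ M i j) (hM' : ∀ i j, 0 ≤ M' i j) :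
    (∑ i : ZMod Nh, ∑ j : ZMod Nh,
        (g i j (Dh Nh U i j) - g i j (Dh Nh U' i j)) * (M i j - M' i j))
    + (∑ i : ZMod Nh, ∑ j : ZMod Nh,
        (Bop Nh g U M i j - Bop Nh g U' M' i j) * (U i j - U' i j)) ≤ 0 := by
  set W : GridFun Nh := gsub U U' with hW
  have hWij : ∀ i j : ZMod Nh, U i j - U' i j = W i j := fun i j => rfl
  -- transport duality
  have hB1 : ∑ i : ZMod Nh, ∑ j : ZMod Nh, Bop Nh g U M i j * W i j
      = - ∑ i : ZMod Nh, ∑ j : ZMod Nh,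
          M i j * ∑ k : Fin 4, gq (g i j) (Dh Nh U i j) k * Dh Nh W i j k := Bop_dual g U M W
  have hB2 : ∑ i : ZMod Nh, ∑ j : ZMod Nh, Bop Nh g U' M' i j * W i j
      = - ∑ i : ZMod Nh, ∑ j : ZMod Nh,
          M' i j * ∑ k : Fin 4, gq (g i j) (Dh Nh U' i j) k * Dh Nh W i j k := Bop_dual g U' M' W
  have hsplit : ∑ i : ZMod Nh, ∑ j : ZMod Nh,
        (Bop Nh g U M i j - Bop Nh g U' M' i j) * (U i j - U' i j)
      = (∑ i : ZMod Nh, ∑ j : ZMod Nh, Bop Nh g U M i j * W i j)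
        - ∑ i : ZMod Nh, ∑ j : ZMod Nh, Bop Nh g U' M' i j * W i j := by
    simp only [hWij, sub_mul, Finset.sum_sub_distrib]
  rw [hsplit, hB1, hB2]
  have hre : (∑ i : ZMod Nh, ∑ j : ZMod Nh,
        (g i j (Dh Nh U i j) - g i j (Dh Nh U' i j)) * (M i j - M' i j))
      + ((- ∑ i : ZMod Nh, ∑ j : ZMod Nh,
          M i j * ∑ k : Fin 4, gq (g i j) (Dh Nh U i j) k * Dh Nh W i j k)
        - (- ∑ i : ZMod Nh, ∑ j : ZMod Nh,
          M' i j * ∑ k : Fin 4, gq (g i j) (Dh Nh U' i j) k * Dh Nh W i j k))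
      = ((∑ i : ZMod Nh, ∑ j : ZMod Nh,
        (g i j (Dh Nh U i j) - g i j (Dh Nh U' i j)) * (M i j - M' i j))
      - ∑ i : ZMod Nh, ∑ j : ZMod Nh,
          M i j * ∑ k : Fin 4, gq (g i j) (Dh Nh U i j) k * Dh Nh W i j k)
      + ∑ i : ZMod Nh, ∑ j : ZMod Nh,
          M' i j * ∑ k : Fin 4, gq (g i j) (Dh Nh U' i j) k * Dh Nh W i j k := by ring
  rw [hre]
  simp only [← Finset.sum_sub_distrib]
  simp only [← Finset.sum_add_distrib]
  apply Finset.sum_nonpos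
  intro i _
  apply Finset.sum_nonpos
  intro j _
  -- pointwise convexity bound
  have hgrad1 := convex_grad (hgC1 i j) (hg4 i j) (Dh Nh U i j) (Dh Nh U' i j)
  have hgrad2 := convex_grad (hgC1 i j) (hg4 i j) (Dh Nh U' i j) (Dh Nh U i j)
  rw [fderiv_pi4_apply] at hgrad1 hgrad2
  have e1 : ∑ k : Fin 4, (Dh Nh U' i j - Dh Nh U i j) k * gq (g i j) (Dh Nh U i j) k
      = - ∑ k : Fin 4, gq (g i j) (Dh Nh U i j) k * Dh Nh W i j k := by
    rw [← Finset.sum_neg_distrib]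
    refine Finset.sum_congr rfl fun k _ => ?_
    rw [Pi.sub_apply, Dh_gsub]
    ring
  have e2 : ∑ k : Fin 4, (Dh Nh U i j - Dh Nh U' i j) k * gq (g i j) (Dh Nh U' i j) k
      = ∑ k : Fin 4, gq (g i j) (Dh Nh U' i j) k * Dh Nh W i j k := by
    refine Finset.sum_congr rfl fun k _ => ?_
    rw [Pi.sub_apply, Dh_gsub]
    ring
  rw [e1] at hgrad1
  rw [e2] at hgrad2
  have hp1 : g i j (Dh Nh U i j) - g i j (Dh Nh U' i j)
      - ∑ k : Fin 4, gq (g i j) (Dh Nh U i j) k * Dh Nh W i j k ≤ 0 := by linarith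
  have hp2 : (g i j (Dh Nh U' i j) - g i j (Dh Nh U i j))
      + ∑ k : Fin 4, gq (g i j) (Dh Nh U' i j) k * Dh Nh W i j k ≤ 0 := by linarith
  have hpt : (g i j (Dh Nh U i j) - g i j (Dh Nh U' i j)) * (M i j - M' i j)
      - M i j * ∑ k : Fin 4, gq (g i j) (Dh Nh U i j) k * Dh Nh W i j k
      + M' i j * ∑ k : Fin 4, gq (g i j) (Dh Nh U' i j) k * Dh Nh W i j k
      = M i j * ((g i j (Dh Nh U i j) - g i j (Dh Nh U' i j))
          - ∑ k : Fin 4, gq (g i j) (Dh Nh U i j) k * Dh Nh W i j k)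
        + M' i j * ((g i j (Dh Nh U' i j) - g i j (Dh Nh U i j))
          + ∑ k : Fin 4, gq (g i j) (Dh Nh U' i j) k * Dh Nh W i j k) := by ring
  rw [hpt]
  exact add_nonpos (mul_nonpos_of_nonneg_of_nonpos (hM i j) hp1)
    (mul_nonpos_of_nonneg_of_nonpos (hM' i j) hp2)

end SpatialKey
section HJB
variable {Nh : ℕ} [NeZero Nh]

lemma hjb_le (g : ZMod Nh → ZMod Nh → (Fin 4 → ℝ) → ℝ)
    (hgC1 : ∀ i j, ContDiff ℝ 1 (g i j)) (hg1 : ∀ i j, G1 (g i j))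
    (hg4 : ∀ i j, ConvexOn ℝ Set.univ (g i j))
    {ρ : ℝ} (hρ : 0 < ρ) (A B : GridFun Nh)
    (heq : ∀ i j, ρ⁻¹ * (A i j - B i j) - (lapl Nh A i j - lapl Nh B i j)
      + (g i j (Dh Nh A i j) - g i j (Dh Nh B i j)) = 0) :
    ∀ i j, A i j ≤ B i j := by
  have hh : 0 < hstep Nh := hstep_pos Nh
  obtain ⟨p, hp⟩ := Finite.exists_max (fun p : ZMod Nh × ZMod Nh => A p.1 p.2 - B p.1 p.2)
  obtain ⟨i, j⟩ := p
  suffices hmax : A i j - B i j ≤ 0 by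
    intro a b
    have := hp (a, b)
    simp only at this
    linarith
  -- Laplacian sign at the max
  have hW : ∀ a b : ZMod Nh, A a b - B a b ≤ A i j - B i j := fun a b => hp (a, b)
  have hlap : lapl Nh A i j - lapl Nh B i j ≤ 0 := by
    have hl : lapl Nh A i j - lapl Nh B i j
        = -((4 * (A i j - B i j) - (A (i+1) j - B (i+1) j) - (A (i-1) j - B (i-1) j)
            - (A i (j+1) - B i (j+1)) - (A i (j-1) - B i (j-1)))) / (hstep Nh) ^ 2 := by
      rw [lapl, lapl]; ring
    rw [hl]
    apply div_nonpos_of_nonpos_of_nonneg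
    · have h1 := hW (i+1) j
      have h2 := hW (i-1) j
      have h3 := hW i (j+1)
      have h4 := hW i (j-1)
      linarith
    · positivity
  -- gradient sign at the max
  have hDh : ∀ k : Fin 4, Dh Nh (gsub A B) i j k = Dh Nh A i j k - Dh Nh B i j k :=
    Dh_gsub A B i j
  have hg : 0 ≤ g i j (Dh Nh A i j) - g i j (Dh Nh B i j) := by
    have hgrad := convex_grad (hgC1 i j) (hg4 i j) (Dh Nh B i j) (Dh Nh A i j)
    rw [fderiv_pi4_apply] at hgrad
    have hterm : 0 ≤ ∑ k : Fin 4, (Dh Nh A i j - Dh Nh B i j) k * gq (g i j) (Dh Nh B i j) k := by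
      apply Finset.sum_nonneg
      intro k _
      have hdk : (Dh Nh A i j - Dh Nh B i j) k = Dh Nh (gsub A B) i j k := by
        rw [Pi.sub_apply, hDh]
      rw [hdk]
      obtain ⟨hq0, hq1, hq2, hq3⟩ := hg1 i j
      fin_cases k
      · show (0:ℝ) ≤ Dh Nh (gsub A B) i j 0 * gq (g i j) (Dh Nh B i j) 0
        have hsign : Dh Nh (gsub A B) i j 0 ≤ 0 := by
          show D1p Nh (gsub A B) i j ≤ 0
          rw [D1p]
          apply div_nonpos_of_nonpos_of_nonneg _ hh.le
          have := hW (i+1) j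
          simp only [gsub]
          linarith
        have hgq := gq_nonpos_of_antitone (hgC1 i j) hq0 (Dh Nh B i j)
        nlinarith [hsign, hgq]
      · show (0:ℝ) ≤ Dh Nh (gsub A B) i j 1 * gq (g i j) (Dh Nh B i j) 1
        have hsign : 0 ≤ Dh Nh (gsub A B) i j 1 := by
          show 0 ≤ D1p Nh (gsub A B) (i-1) j
          rw [D1p]
          apply div_nonneg _ hh.le
          have := hW (i-1) j
          simp only [gsub, sub_add_cancel]
          linarith
        exact mul_nonneg hsign (gq_nonneg_of_monotone (hgC1 i j) hq1 _)
      · show (0:ℝ) ≤ Dh Nh (gsub A B) i j 2 * gq (g i j) (Dh Nh B i j) 2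
        have hsign : Dh Nh (gsub A B) i j 2 ≤ 0 := by
          show D2p Nh (gsub A B) i j ≤ 0
          rw [D2p]
          apply div_nonpos_of_nonpos_of_nonneg _ hh.le
          have := hW i (j+1)
          simp only [gsub]
          linarith
        have hgq := gq_nonpos_of_antitone (hgC1 i j) hq2 (Dh Nh B i j)
        nlinarith [hsign, hgq]
      · show (0:ℝ) ≤ Dh Nh (gsub A B) i j 3 * gq (g i j) (Dh Nh B i j) 3
        have hsign : 0 ≤ Dh Nh (gsub A B) i j 3 := by
          show 0 ≤ D2p Nh (gsub A B) i (j-1)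
          rw [D2p]
          apply div_nonneg _ hh.le
          have := hW i (j-1)
          simp only [gsub, sub_add_cancel]
          linarith
        exact mul_nonneg hsign (gq_nonneg_of_monotone (hgC1 i j) hq3 _)
    linarith
  -- conclude
  have := heq i j
  have hρ' : 0 < ρ⁻¹ := inv_pos.2 hρ
  nlinarith [this, hlap, hg, hρ']

lemma hjb_eq (g : ZMod Nh → ZMod Nh → (Fin 4 → ℝ) → ℝ)
    (hgC1 : ∀ i j, ContDiff ℝ 1 (g i j)) (hg1 : ∀ i j, G1 (g i j))
    (hg4 : ∀ i j, ConvexOn ℝ Set.univ (g i j))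
    {ρ : ℝ} (hρ : 0 < ρ) (A B : GridFun Nh)
    (heq : ∀ i j, ρ⁻¹ * (A i j - B i j) - (lapl Nh A i j - lapl Nh B i j)
      + (g i j (Dh Nh A i j) - g i j (Dh Nh B i j)) = 0) :
    A = B := by
  have h1 := hjb_le g hgC1 hg1 hg4 hρ A B heq
  have h2 := hjb_le g hgC1 hg1 hg4 hρ B A (fun i j => by have := heq i j; linarith)
  funext i j
  exact le_antisymm (h1 i j) (h2 i j)

end HJB
section DiffLemmas

lemma DB_sub (α Δt : ℝ) (N n : ℕ) (w w' : ℕ → ℝ) :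
    DB α Δt N w n - DB α Δt N w' n = DB α Δt N (fun m => w m - w' m) n := by
  simp only [DB, ← mul_sub]
  congr 1
  simp only [mul_sub, Finset.sum_sub_distrib]
  ring

lemma DF_sub (α Δt : ℝ) (n : ℕ) (w w' : ℕ → ℝ) :
    DF α Δt w n - DF α Δt w' n = DF α Δt (fun m => w m - w' m) n := by
  simp only [DF, ← mul_sub]
  congr 1
  simp only [mul_sub, Finset.sum_sub_distrib]
  ring

end DiffLemmas

/-- Uniqueness for the discrete time-fractional MFG scheme. -/
theorem MFG_uniqueness (α Δt : ℝ) (hα : α ∈ Set.Ioo (0 : ℝ) 1) (hΔt : 0 < Δt)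
    (N Nh : ℕ) [NeZero Nh]
    (g : ZMod Nh → ZMod Nh → (Fin 4 → ℝ) → ℝ)
    (hgC1 : ∀ i j, ContDiff ℝ 1 (g i j)) (hg1 : ∀ i j, G1 (g i j))
    (hg4 : ∀ i j, ConvexOn ℝ Set.univ (g i j))
    (fh : GridFun Nh → GridFun Nh)
    (hmono : ∀ M M' : GridFun Nh, M ∈ Kh Nh → M' ∈ Kh Nh →
      0 ≤ inner2 Nh (fh M - fh M') (M - M'))
    (hstrict : ∀ M M' : GridFun Nh, M ∈ Kh Nh → M' ∈ Kh Nh →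
      inner2 Nh (fh M - fh M') (M - M') = 0 → M = M')
    (U M U' M' : ℕ → GridFun Nh)
    (hKh : ∀ n ≤ N, M n ∈ Kh Nh) (hKh' : ∀ n ≤ N, M' n ∈ Kh Nh)
    (hHJB : ∀ n < N, ∀ i j,
      DB α Δt N (fun m => U m i j) n - lapl Nh (U n) i j
        + g i j (Dh Nh (U n) i j) = fh (M (n + 1)) i j)
    (hFP : ∀ n < N, ∀ i j,
      DF α Δt (fun m => M m i j) (n + 1) - lapl Nh (M (n + 1)) i j
        - Bop Nh g (U n) (M (n + 1)) i j = 0)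
    (hHJB' : ∀ n < N, ∀ i j,
      DB α Δt N (fun m => U' m i j) n - lapl Nh (U' n) i j
        + g i j (Dh Nh (U' n) i j) = fh (M' (n + 1)) i j)
    (hFP' : ∀ n < N, ∀ i j,
      DF α Δt (fun m => M' m i j) (n + 1) - lapl Nh (M' (n + 1)) i j
        - Bop Nh g (U' n) (M' (n + 1)) i j = 0)
    (hterm : U N = U' N) (hinit : M 0 = M' 0) :
    ∀ n ≤ N, U n = U' n ∧ M n = M' n := by
  have hρ : 0 < rhoA α Δt := rhoA_pos hα hΔt
  have hstep2 : (0:ℝ) ≤ hstep Nh ^ 2 := sq_nonneg _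
  -- Step A : the measures coincide
  have hMeq : ∀ n, n ≤ N → M n = M' n := by
    have hΦnonneg : ∀ n ∈ Finset.range N,
        0 ≤ inner2 Nh (fh (M (n+1)) - fh (M' (n+1))) (M (n+1) - M' (n+1)) := by
      intro n hn; rw [Finset.mem_range] at hn
      exact hmono _ _ (hKh (n+1) (by omega)) (hKh' (n+1) (by omega))
    have hΦsum : ∑ n ∈ Finset.range N,
        inner2 Nh (fh (M (n+1)) - fh (M' (n+1))) (M (n+1) - M' (n+1)) ≤ 0 := by
      have hkey : ∀ n ∈ Finset.range N,
          inner2 Nh (fh (M (n+1)) - fh (M' (n+1))) (M (n+1) - M' (n+1))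
          ≤ hstep Nh ^ 2 * ∑ i : ZMod Nh, ∑ j : ZMod Nh,
            (DB α Δt N (fun m => U m i j - U' m i j) n * (M (n+1) i j - M' (n+1) i j)
              - DF α Δt (fun m => M m i j - M' m i j) (n+1) * (U n i j - U' n i j)) := by
        intro n hn; rw [Finset.mem_range] at hn
        have hΦn : inner2 Nh (fh (M (n+1)) - fh (M' (n+1))) (M (n+1) - M' (n+1))
            = hstep Nh ^ 2 * ∑ i : ZMod Nh, ∑ j : ZMod Nh,
              (fh (M (n+1)) i j - fh (M' (n+1)) i j) * (M (n+1) i j - M' (n+1) i j) := by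
          simp only [inner2, Pi.sub_apply]
        have hF : ∀ i j : ZMod Nh, fh (M (n+1)) i j - fh (M' (n+1)) i j
            = DB α Δt N (fun m => U m i j - U' m i j) n
              - (lapl Nh (U n) i j - lapl Nh (U' n) i j)
              + (g i j (Dh Nh (U n) i j) - g i j (Dh Nh (U' n) i j)) := by
          intro i j
          have e1 := hHJB n hn i j
          have e2 := hHJB' n hn i j
          have e3 := DB_sub α Δt N n (fun m => U m i j) (fun m => U' m i j)
          linarith
        have hFPz : ∀ i j : ZMod Nh,
            DF α Δt (fun m => M m i j - M' m i j) (n+1)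
            = (lapl Nh (M (n+1)) i j - lapl Nh (M' (n+1)) i j)
              + (Bop Nh g (U n) (M (n+1)) i j - Bop Nh g (U' n) (M' (n+1)) i j) := by
          intro i j
          have e1 := hFP n hn i j
          have e2 := hFP' n hn i j
          have e3 := DF_sub α Δt (n+1) (fun m => M m i j) (fun m => M' m i j)
          linarith
        rw [hΦn]
        apply mul_le_mul_of_nonneg_left _ hstep2
        -- pointwise decomposition
        have hpt : ∀ i j : ZMod Nh,
            (fh (M (n+1)) i j - fh (M' (n+1)) i j) * (M (n+1) i j - M' (n+1) i j)
            = (DB α Δt N (fun m => U m i j - U' m i j) n * (M (n+1) i j - M' (n+1) i j)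
                - DF α Δt (fun m => M m i j - M' m i j) (n+1) * (U n i j - U' n i j))
              + (- (lapl Nh (U n) i j - lapl Nh (U' n) i j) * (M (n+1) i j - M' (n+1) i j)
                + (lapl Nh (M (n+1)) i j - lapl Nh (M' (n+1)) i j) * (U n i j - U' n i j))
              + ((g i j (Dh Nh (U n) i j) - g i j (Dh Nh (U' n) i j)) * (M (n+1) i j - M' (n+1) i j)
                + (Bop Nh g (U n) (M (n+1)) i j - Bop Nh g (U' n) (M' (n+1)) i j)
                  * (U n i j - U' n i j)) := by
          intro i j
          rw [hF i j, hFPz i j]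
          ring
        simp only [hpt, Finset.sum_add_distrib]
        -- Laplacian part cancels
        have hlapA : (∑ i : ZMod Nh, ∑ j : ZMod Nh,
              - (lapl Nh (U n) i j - lapl Nh (U' n) i j) * (M (n+1) i j - M' (n+1) i j))
            + (∑ i : ZMod Nh, ∑ j : ZMod Nh,
              (lapl Nh (M (n+1)) i j - lapl Nh (M' (n+1)) i j) * (U n i j - U' n i j)) = 0 := by
          have hc := lapl_cancel (Nh := Nh) (U n) (U' n) (M (n+1)) (M' (n+1))
          have hneg : ∑ i : ZMod Nh, ∑ j : ZMod Nh,
              (- (lapl Nh (U n) i j - lapl Nh (U' n) i j) * (M (n+1) i j - M' (n+1) i j))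
              = - ∑ i : ZMod Nh, ∑ j : ZMod Nh,
                (lapl Nh (U n) i j - lapl Nh (U' n) i j) * (M (n+1) i j - M' (n+1) i j) := by
            simp only [neg_mul, Finset.sum_neg_distrib]
          rw [hneg, hc]
          ring
        -- spatial part is nonpositive
        have hsp := spatial_key g hgC1 hg4 (U n) (U' n) (M (n+1)) (M' (n+1))
          (hKh (n+1) (by omega)).1 (hKh' (n+1) (by omega)).1
        linarith [hsp, hlapA]
      calc ∑ n ∈ Finset.range N,
            inner2 Nh (fh (M (n+1)) - fh (M' (n+1))) (M (n+1) - M' (n+1))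
          ≤ ∑ n ∈ Finset.range N, hstep Nh ^ 2 * ∑ i : ZMod Nh, ∑ j : ZMod Nh,
            (DB α Δt N (fun m => U m i j - U' m i j) n * (M (n+1) i j - M' (n+1) i j)
              - DF α Δt (fun m => M m i j - M' m i j) (n+1) * (U n i j - U' n i j)) :=
            Finset.sum_le_sum hkey
        _ = hstep Nh ^ 2 * ∑ n ∈ Finset.range N, ∑ i : ZMod Nh, ∑ j : ZMod Nh,
            (DB α Δt N (fun m => U m i j - U' m i j) n * (M (n+1) i j - M' (n+1) i j)
              - DF α Δt (fun m => M m i j - M' m i j) (n+1) * (U n i j - U' n i j)) :=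
            (Finset.mul_sum _ _ _).symm
        _ = 0 := by
            rw [Finset.sum_comm]
            have hz : ∀ i : ZMod Nh, ∑ n ∈ Finset.range N, ∑ j : ZMod Nh,
                (DB α Δt N (fun m => U m i j - U' m i j) n * (M (n+1) i j - M' (n+1) i j)
                  - DF α Δt (fun m => M m i j - M' m i j) (n+1) * (U n i j - U' n i j)) = 0 := by
              intro i
              rw [Finset.sum_comm]
              apply Finset.sum_eq_zero
              intro j _
              have hv : (fun m => U m i j - U' m i j) N = 0 := by
                show U N i j - U' N i j = 0
                rw [hterm]; ring
              have hr : (fun m => M m i j - M' m i j) 0 = 0 := by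
                show M 0 i j - M' 0 i j = 0
                rw [hinit]; ring
              exact time_cancel α Δt N (fun m => U m i j - U' m i j)
                (fun m => M m i j - M' m i j) hv hr
            rw [Finset.sum_congr rfl (fun i _ => hz i), Finset.sum_const, smul_zero, mul_zero]
    have hΦzero := (Finset.sum_eq_zero_iff_of_nonneg hΦnonneg).1
      (le_antisymm hΦsum (Finset.sum_nonneg hΦnonneg))
    intro n hn
    match n with
    | 0 => exact hinit
    | (m+1) =>
      exact hstrict _ _ (hKh (m+1) hn) (hKh' (m+1) hn)
        (hΦzero m (Finset.mem_range.2 (by omega)))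
  -- Step B : backward induction for the value functions
  have hUeq : ∀ d : ℕ, ∀ n : ℕ, N ≤ n + d → n ≤ N → U n = U' n := by
    intro d
    induction d with
    | zero =>
      intro n h1 h2
      have : n = N := by omega
      subst this; exact hterm
    | succ d ih =>
      intro n h1 h2
      by_cases hn : n = N
      · subst hn; exact hterm
      have hnN : n < N := by omega
      have hlater : ∀ k, n + 1 ≤ k → k ≤ N → U k = U' k := fun k hk1 hk2 => ih k (by omega) hk2
      apply hjb_eq g hgC1 hg1 hg4 hρ
      intro i j
      have e1 := hHJB n hnN i j
      have e2 := hHJB' n hnN i j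
      have hMn : M (n+1) = M' (n+1) := hMeq (n+1) (by omega)
      rw [hMn] at e1
      have hDB : DB α Δt N (fun m => U m i j) n - DB α Δt N (fun m => U' m i j) n
          = (rhoA α Δt)⁻¹ * (U n i j - U' n i j) := by
        rw [DB, DB]
        have hsum_eq : ∑ k ∈ Finset.Icc (n+1) N, cB α N n k * U k i j
            = ∑ k ∈ Finset.Icc (n+1) N, cB α N n k * U' k i j := by
          refine Finset.sum_congr rfl fun k hk => ?_
          rw [Finset.mem_Icc] at hk
          rw [hlater k hk.1 hk.2]
        rw [hsum_eq]; ring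
      linarith
  intro n hn
  exact ⟨hUeq (N - n) n (by omega) hn, hMeq n hn⟩
end
end

section
/- Existence and uniqueness for the discrete backward time-fractional Hamilton–Jacobi–Bellman scheme: Let g be a numerical Hamiltonian that is continuous in q and satisfies (G1) (nonincreasing in q₁ and q₃, nondecreasing in q₂ and q₄). Given grid functions F⁰,…,F^{N−1} and a terminal grid datum Uᴺ, there exists a unique family of grid functions (Uⁿ)_{n=0}^{N−1} satisfying D̄^α_{Δt}Uⁿ_{i,j} − (Δ_hUⁿ)_{i,j} + g(x_{i,j}, [D_hUⁿ]_{i,j}) = Fⁿ_{i,j} for all n = 0,…,N−1 and all grid indices (i,j). -/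
open Real Finset

noncomputable section

namespace HJBaux

lemma gmono {g : (Fin 4 → ℝ) → ℝ} (hg : G1 g) {q q' : Fin 4 → ℝ}
    (h0 : q' 0 ≤ q 0) (h1 : q 1 ≤ q' 1) (h2 : q' 2 ≤ q 2) (h3 : q 3 ≤ q' 3) :
    g q ≤ g q' := by
  obtain ⟨hga, hgb, hgcc, hgd⟩ := hg
  set r1 := Function.update q 0 (q' 0) with hr1
  set r2 := Function.update r1 1 (q' 1) with hr2
  set r3 := Function.update r2 2 (q' 2) with hr3
  have e4 : Function.update r3 3 (q' 3) = q' := by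
    funext i; fin_cases i <;> simp [hr3, hr2, hr1, Function.update]
  have s1 : g q ≤ g r1 := by
    have := hga q h0
    simpa using this
  have s2 : g r1 ≤ g r2 := by
    have h1' : r1 1 ≤ q' 1 := by simpa [hr1] using h1
    have := hgb r1 h1'
    simpa using this
  have s3 : g r2 ≤ g r3 := by
    have h2' : q' 2 ≤ r2 2 := by simpa [hr2, hr1] using h2
    have := hgcc r2 h2'
    simpa using this
  have s4 : g r3 ≤ g q' := by
    have h3' : r3 3 ≤ q' 3 := by simpa [hr3, hr2, hr1] using h3
    have := hgd r3 h3'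
    simpa [e4] using this
  linarith

/-- the candidate discrete gradient with center value `s` -/
def vec (Nh : ℕ) (X : GridFun Nh) (i j : ZMod Nh) (s : ℝ) : Fin 4 → ℝ := fun k =>
  if k = 0 then (X (i + 1) j - s) / hstep Nh
  else if k = 1 then (s - X (i - 1) j) / hstep Nh
  else if k = 2 then (X i (j + 1) - s) / hstep Nh
  else (s - X i (j - 1)) / hstep Nh

lemma vec_self (Nh : ℕ) (X : GridFun Nh) (i j : ZMod Nh) :
    vec Nh X i j (X i j) = Dh Nh X i j := by
  funext k
  fin_cases k <;> simp [vec, Dh, D1p, D2p, sub_add_cancel]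

def Psi (Nh : ℕ) (g : ZMod Nh → ZMod Nh → (Fin 4 → ℝ) → ℝ) (ρ : ℝ) (S b : GridFun Nh)
    (X : GridFun Nh) (i j : ZMod Nh) (s : ℝ) : ℝ :=
  ρ * (s - S i j)
    + (4 * s - X (i + 1) j - X (i - 1) j - X i (j + 1) - X i (j - 1)) / (hstep Nh) ^ 2
    + g i j (vec Nh X i j s) - b i j

lemma Psi_self (Nh : ℕ) (g : ZMod Nh → ZMod Nh → (Fin 4 → ℝ) → ℝ) (ρ : ℝ) (S b X : GridFun Nh)
    (i j : ZMod Nh) :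
    Psi Nh g ρ S b X i j (X i j)
      = ρ * (X i j - S i j) - lapl Nh X i j + g i j (Dh Nh X i j) - b i j := by
  rw [Psi, vec_self, lapl]; ring

lemma hstep_pos (Nh : ℕ) [NeZero Nh] : 0 < hstep Nh := by
  rw [hstep]
  have : (0:ℝ) < (Nh : ℝ) := by
    exact_mod_cast Nat.pos_of_ne_zero (NeZero.ne Nh)
  positivity

lemma vec_mono (Nh : ℕ) [NeZero Nh] (g : ZMod Nh → ZMod Nh → (Fin 4 → ℝ) → ℝ)
    (hg1 : ∀ i j, G1 (g i j)) (X : GridFun Nh) (i j : ZMod Nh) :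
    Monotone (fun s => g i j (vec Nh X i j s)) := by
  have hh := hstep_pos Nh
  intro s t hst
  apply gmono (hg1 i j)
  · show (X (i + 1) j - t) / hstep Nh ≤ (X (i + 1) j - s) / hstep Nh
    rw [div_le_div_iff_of_pos_right hh]; linarith
  · show (s - X (i - 1) j) / hstep Nh ≤ (t - X (i - 1) j) / hstep Nh
    rw [div_le_div_iff_of_pos_right hh]; linarith
  · show (X i (j + 1) - t) / hstep Nh ≤ (X i (j + 1) - s) / hstep Nh
    rw [div_le_div_iff_of_pos_right hh]; linarith
  · show (s - X i (j - 1)) / hstep Nh ≤ (t - X i (j - 1)) / hstep Nh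
    rw [div_le_div_iff_of_pos_right hh]; linarith

lemma Psi_strictMono (Nh : ℕ) [NeZero Nh] (g : ZMod Nh → ZMod Nh → (Fin 4 → ℝ) → ℝ)
    (hg1 : ∀ i j, G1 (g i j)) (ρ : ℝ) (hρ : 0 < ρ) (S b X : GridFun Nh) (i j : ZMod Nh) :
    StrictMono (Psi Nh g ρ S b X i j) := by
  have h2 : (0:ℝ) < (hstep Nh) ^ 2 := pow_pos (hstep_pos Nh) 2
  intro s t hst
  have hg := vec_mono Nh g hg1 X i j hst.le
  simp only at hg
  rw [Psi, Psi]
  have hd : (4 * s - X (i + 1) j - X (i - 1) j - X i (j + 1) - X i (j - 1)) / (hstep Nh) ^ 2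
      < (4 * t - X (i + 1) j - X (i - 1) j - X i (j + 1) - X i (j - 1)) / (hstep Nh) ^ 2 := by
    rw [div_lt_div_iff_of_pos_right h2]; linarith
  have hr : ρ * (s - S i j) < ρ * (t - S i j) := by nlinarith
  linarith

lemma Psi_anti (Nh : ℕ) [NeZero Nh] (g : ZMod Nh → ZMod Nh → (Fin 4 → ℝ) → ℝ)
    (hg1 : ∀ i j, G1 (g i j)) (ρ : ℝ) (S b X Y : GridFun Nh)
    (hXY : ∀ i j, X i j ≤ Y i j) (i j : ZMod Nh) (s : ℝ) :
    Psi Nh g ρ S b Y i j s ≤ Psi Nh g ρ S b X i j s := by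
  have hh := hstep_pos Nh
  have h2 : (0:ℝ) < (hstep Nh) ^ 2 := by positivity
  rw [Psi, Psi]
  have hd : (4 * s - Y (i + 1) j - Y (i - 1) j - Y i (j + 1) - Y i (j - 1)) / (hstep Nh) ^ 2
      ≤ (4 * s - X (i + 1) j - X (i - 1) j - X i (j + 1) - X i (j - 1)) / (hstep Nh) ^ 2 := by
    rw [div_le_div_iff_of_pos_right h2]
    have h1 := hXY (i + 1) j
    have h2 := hXY (i - 1) j
    have h3 := hXY i (j + 1)
    have h4 := hXY i (j - 1)
    linarith
  have hg : g i j (vec Nh Y i j s) ≤ g i j (vec Nh X i j s) := by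
    apply gmono (hg1 i j)
    · show (X (i + 1) j - s) / hstep Nh ≤ (Y (i + 1) j - s) / hstep Nh
      rw [div_le_div_iff_of_pos_right hh]; have := hXY (i + 1) j; linarith
    · show (s - Y (i - 1) j) / hstep Nh ≤ (s - X (i - 1) j) / hstep Nh
      rw [div_le_div_iff_of_pos_right hh]; have := hXY (i - 1) j; linarith
    · show (X i (j + 1) - s) / hstep Nh ≤ (Y i (j + 1) - s) / hstep Nh
      rw [div_le_div_iff_of_pos_right hh]; have := hXY i (j + 1); linarith
    · show (s - Y i (j - 1)) / hstep Nh ≤ (s - X i (j - 1)) / hstep Nh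
      rw [div_le_div_iff_of_pos_right hh]; have := hXY i (j - 1); linarith
  linarith

lemma Psi_root (Nh : ℕ) [NeZero Nh] (g : ZMod Nh → ZMod Nh → (Fin 4 → ℝ) → ℝ)
    (hgc : ∀ i j, Continuous (g i j)) (hg1 : ∀ i j, G1 (g i j)) (ρ : ℝ) (hρ : 0 < ρ)
    (S b X : GridFun Nh) (i j : ZMod Nh) : ∃ s, Psi Nh g ρ S b X i j s = 0 := by
  have hh := hstep_pos Nh
  have h2 : (0:ℝ) < (hstep Nh) ^ 2 := by positivity
  set L : ℝ := ρ + 4 / (hstep Nh) ^ 2 with hL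
  have hLpos : 0 < L := by
    rw [hL]
    have h4 : (0:ℝ) < 4 / (hstep Nh) ^ 2 := by positivity
    linarith
  set K : ℝ := - (ρ * S i j)
      - (X (i + 1) j + X (i - 1) j + X i (j + 1) + X i (j - 1)) / (hstep Nh) ^ 2 - b i j with hK
  have key : ∀ s, Psi Nh g ρ S b X i j s = L * s + K + g i j (vec Nh X i j s) := by
    intro s
    rw [Psi, hL, hK]
    field_simp
    ring
  set G0 : ℝ := g i j (vec Nh X i j 0) with hG0
  set sp : ℝ := max 0 ((-(K + G0)) / L) with hsp
  set sm : ℝ := min 0 ((-(K + G0)) / L) with hsm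
  have hsmsp : sm ≤ sp := le_trans (min_le_left _ _) (le_max_left _ _)
  have hPsp : 0 ≤ Psi Nh g ρ S b X i j sp := by
    rw [key]
    have hg : G0 ≤ g i j (vec Nh X i j sp) := vec_mono Nh g hg1 X i j (le_max_left _ _)
    have : (-(K + G0)) / L ≤ sp := le_max_right _ _
    rw [div_le_iff₀ hLpos] at this
    nlinarith
  have hPsm : Psi Nh g ρ S b X i j sm ≤ 0 := by
    rw [key]
    have hg : g i j (vec Nh X i j sm) ≤ G0 := vec_mono Nh g hg1 X i j (min_le_left _ _)
    have : sm ≤ (-(K + G0)) / L := min_le_right _ _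
    rw [le_div_iff₀ hLpos] at this
    nlinarith
  have hcont : ContinuousOn (Psi Nh g ρ S b X i j) (Set.Icc sm sp) := by
    apply Continuous.continuousOn
    have hvec : Continuous (fun s => vec Nh X i j s) := by
      apply continuous_pi
      intro k
      simp only [vec]
      split_ifs <;> fun_prop
    have hgvec : Continuous (fun s => g i j (vec Nh X i j s)) := (hgc i j).comp hvec
    unfold Psi
    fun_prop
  have := intermediate_value_Icc hsmsp hcont
  have h0 : (0:ℝ) ∈ Set.Icc (Psi Nh g ρ S b X i j sm) (Psi Nh g ρ S b X i j sp) :=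
    ⟨hPsm, hPsp⟩
  obtain ⟨s, -, hs⟩ := this h0
  exact ⟨s, hs⟩

lemma stage_le (Nh : ℕ) [NeZero Nh] (g : ZMod Nh → ZMod Nh → (Fin 4 → ℝ) → ℝ)
    (hg1 : ∀ i j, G1 (g i j)) (ρ : ℝ) (hρ : 0 < ρ) (S b X Y : GridFun Nh)
    (hX : ∀ i j, ρ * (X i j - S i j) - lapl Nh X i j + g i j (Dh Nh X i j) = b i j)
    (hY : ∀ i j, ρ * (Y i j - S i j) - lapl Nh Y i j + g i j (Dh Nh Y i j) = b i j) :
    ∀ i j, Y i j ≤ X i j := by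
  have hh := hstep_pos Nh
  have h2 : (0:ℝ) < (hstep Nh) ^ 2 := by positivity
  obtain ⟨p, -, hp⟩ := Finset.exists_max_image (Finset.univ : Finset (ZMod Nh × ZMod Nh))
      (fun p => Y p.1 p.2 - X p.1 p.2) Finset.univ_nonempty
  have hp' : ∀ a b : ZMod Nh, Y a b - X a b ≤ Y p.1 p.2 - X p.1 p.2 := fun a b =>
    hp (a, b) (Finset.mem_univ _)
  suffices hmax : Y p.1 p.2 - X p.1 p.2 ≤ 0 by
    intro i j
    have := hp' i j
    linarith
  set i := p.1
  set j := p.2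
  have hgcmp : g i j (Dh Nh X i j) ≤ g i j (Dh Nh Y i j) := by
    apply gmono (hg1 i j)
    · show D1p Nh Y i j ≤ D1p Nh X i j
      rw [D1p, D1p, div_le_div_iff_of_pos_right hh]
      have := hp' (i + 1) j
      linarith
    · show D1p Nh X (i - 1) j ≤ D1p Nh Y (i - 1) j
      rw [D1p, D1p, sub_add_cancel, div_le_div_iff_of_pos_right hh]
      have := hp' (i - 1) j
      linarith
    · show D2p Nh Y i j ≤ D2p Nh X i j
      rw [D2p, D2p, div_le_div_iff_of_pos_right hh]
      have := hp' i (j + 1)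
      linarith
    · show D2p Nh X i (j - 1) ≤ D2p Nh Y i (j - 1)
      rw [D2p, D2p, sub_add_cancel, div_le_div_iff_of_pos_right hh]
      have := hp' i (j - 1)
      linarith
  have hlap : lapl Nh Y i j - lapl Nh X i j ≤ 0 := by
    rw [lapl, lapl, div_sub_div_same]
    apply div_nonpos_of_nonpos_of_nonneg _ h2.le
    have h1 := hp' (i + 1) j
    have h2 := hp' (i - 1) j
    have h3 := hp' i (j + 1)
    have h4 := hp' i (j - 1)
    linarith
  have hXp := hX i j
  have hYp := hY i j
  have key : ρ * (Y i j - X i j) ≤ 0 := by linarith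
  by_contra hcon
  push_neg at hcon
  nlinarith

lemma stage_unique (Nh : ℕ) [NeZero Nh] (g : ZMod Nh → ZMod Nh → (Fin 4 → ℝ) → ℝ)
    (hg1 : ∀ i j, G1 (g i j)) (ρ : ℝ) (hρ : 0 < ρ) (S b X Y : GridFun Nh)
    (hX : ∀ i j, ρ * (X i j - S i j) - lapl Nh X i j + g i j (Dh Nh X i j) = b i j)
    (hY : ∀ i j, ρ * (Y i j - S i j) - lapl Nh Y i j + g i j (Dh Nh Y i j) = b i j) :
    Y = X := by
  funext i j
  exact le_antisymm (stage_le Nh g hg1 ρ hρ S b X Y hX hY i j)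
    (stage_le Nh g hg1 ρ hρ S b Y X hY hX i j)

lemma vec_const (Nh : ℕ) (c : ℝ) (i j : ZMod Nh) :
    vec Nh (fun _ _ => c) i j c = fun _ => 0 := by
  funext k
  simp only [vec]
  split_ifs <;> simp

lemma stage_exists (Nh : ℕ) [NeZero Nh] (g : ZMod Nh → ZMod Nh → (Fin 4 → ℝ) → ℝ)
    (hgc : ∀ i j, Continuous (g i j)) (hg1 : ∀ i j, G1 (g i j)) (ρ : ℝ) (hρ : 0 < ρ)
    (S b : GridFun Nh) :
    ∃ X : GridFun Nh,
      ∀ i j, ρ * (X i j - S i j) - lapl Nh X i j + g i j (Dh Nh X i j) = b i j := by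
  choose Φ hΦ using fun X : GridFun Nh => fun i j => Psi_root Nh g hgc hg1 ρ hρ S b X i j
  -- monotonicity of Φ
  have hmono : ∀ X Y : GridFun Nh, (∀ i j, X i j ≤ Y i j) → ∀ i j, Φ X i j ≤ Φ Y i j := by
    intro X Y hXY i j
    have h1 : Psi Nh g ρ S b Y i j (Φ X i j) ≤ Psi Nh g ρ S b Y i j (Φ Y i j) := by
      rw [hΦ Y i j]
      calc Psi Nh g ρ S b Y i j (Φ X i j) ≤ Psi Nh g ρ S b X i j (Φ X i j) :=
            Psi_anti Nh g hg1 ρ S b X Y hXY i j _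
        _ = 0 := hΦ X i j
    exact (Psi_strictMono Nh g hg1 ρ hρ S b Y i j).le_iff_le.mp h1
  -- sub and super solution constants
  set e : ZMod Nh × ZMod Nh → ℝ := fun p =>
    S p.1 p.2 + (b p.1 p.2 - g p.1 p.2 (fun _ => 0)) / ρ with he
  have hne : (Finset.univ : Finset (ZMod Nh × ZMod Nh)).Nonempty := Finset.univ_nonempty
  set cp : ℝ := Finset.univ.sup' hne e with hcp
  set cm : ℝ := Finset.univ.inf' hne e with hcm
  have hcmp : cm ≤ cp := by
    obtain ⟨p, hp⟩ := hne
    exact le_trans (Finset.inf'_le e (Finset.mem_univ p)) (Finset.le_sup' e (Finset.mem_univ p))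
  have hPsiConst : ∀ c : ℝ, ∀ i j : ZMod Nh,
      Psi Nh g ρ S b (fun _ _ => c) i j c = ρ * (c - e (i, j)) := by
    intro c i j
    rw [Psi, vec_const, he]
    field_simp
    ring
  have hsub : ∀ i j, cm ≤ Φ (fun _ _ => cm) i j := by
    intro i j
    have h1 : Psi Nh g ρ S b (fun _ _ => cm) i j cm ≤ Psi Nh g ρ S b (fun _ _ => cm) i j
        (Φ (fun _ _ => cm) i j) := by
      rw [hΦ, hPsiConst]
      have : cm ≤ e (i, j) := Finset.inf'_le e (Finset.mem_univ _)
      nlinarith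
    exact (Psi_strictMono Nh g hg1 ρ hρ S b _ i j).le_iff_le.mp h1
  have hsup : ∀ i j, Φ (fun _ _ => cp) i j ≤ cp := by
    intro i j
    have h1 : Psi Nh g ρ S b (fun _ _ => cp) i j (Φ (fun _ _ => cp) i j)
        ≤ Psi Nh g ρ S b (fun _ _ => cp) i j cp := by
      rw [hΦ, hPsiConst]
      have : e (i, j) ≤ cp := Finset.le_sup' e (Finset.mem_univ _)
      nlinarith
    exact (Psi_strictMono Nh g hg1 ρ hρ S b _ i j).le_iff_le.mp h1
  -- Perron / Knaster-Tarski
  set A : Set (GridFun Nh) := {X | (∀ i j, X i j ≤ cp) ∧ ∀ i j, X i j ≤ Φ X i j} with hA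
  have hmemcm : (fun _ _ => cm) ∈ A := ⟨fun i j => hcmp, hsub⟩
  have hAne : ∀ i j : ZMod Nh, ((fun X : GridFun Nh => X i j) '' A).Nonempty :=
    fun i j => ⟨cm, ⟨_, hmemcm, rfl⟩⟩
  have hbdd : ∀ i j : ZMod Nh, BddAbove ((fun X : GridFun Nh => X i j) '' A) := by
    intro i j
    refine ⟨cp, ?_⟩
    rintro t ⟨X, hX, rfl⟩
    exact hX.1 i j
  set U : GridFun Nh := fun i j => sSup ((fun X : GridFun Nh => X i j) '' A) with hU
  have hle_star : ∀ X ∈ A, ∀ i j, X i j ≤ U i j := by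
    intro X hX i j
    exact le_csSup (hbdd i j) ⟨X, hX, rfl⟩
  have hstar_cp : ∀ i j, U i j ≤ cp := by
    intro i j
    apply csSup_le (hAne i j)
    rintro t ⟨X, hX, rfl⟩
    exact hX.1 i j
  have hstar_le : ∀ i j, U i j ≤ Φ U i j := by
    intro i j
    apply csSup_le (hAne i j)
    rintro t ⟨X, hX, rfl⟩
    exact le_trans (hX.2 i j) (hmono X U (hle_star X hX) i j)
  have hPhimem : Φ U ∈ A := by
    constructor
    · intro i j
      exact le_trans (hmono U (fun _ _ => cp) hstar_cp i j) (hsup i j)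
    · intro i j
      exact hmono U (Φ U) hstar_le i j
  have hfix : Φ U = U := by
    funext i j
    exact le_antisymm (hle_star (Φ U) hPhimem i j) (hstar_le i j)
  refine ⟨U, fun i j => ?_⟩
  have h0 := hΦ U i j
  rw [hfix] at h0
  rw [Psi_self] at h0
  linarith

end HJBaux

/-- Existence and uniqueness for the discrete backward time-fractional HJB scheme. -/
theorem HJB_existence_uniqueness (α Δt : ℝ) (hα : α ∈ Set.Ioo (0 : ℝ) 1)
    (hΔt : 0 < Δt) (N Nh : ℕ) [NeZero Nh]
    (g : ZMod Nh → ZMod Nh → (Fin 4 → ℝ) → ℝ)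
    (hgc : ∀ i j, Continuous (g i j)) (hg1 : ∀ i j, G1 (g i j))
    (F : ℕ → GridFun Nh) (UN : GridFun Nh) :
    ∃ U : ℕ → GridFun Nh,
      (U N = UN ∧ ∀ n < N, ∀ i j,
          DB α Δt N (fun m => U m i j) n - lapl Nh (U n) i j
            + g i j (Dh Nh (U n) i j) = F n i j) ∧
      ∀ V : ℕ → GridFun Nh,
        (V N = UN ∧ ∀ n < N, ∀ i j,
          DB α Δt N (fun m => V m i j) n - lapl Nh (V n) i j
            + g i j (Dh Nh (V n) i j) = F n i j) →
        ∀ n ≤ N, V n = U n := by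
  obtain ⟨hα0, hα1⟩ := hα
  have hρ : 0 < (rhoA α Δt)⁻¹ := by
    rw [rhoA]
    have hg : 0 < Real.Gamma (2 - α) := Real.Gamma_pos_of_pos (by linarith)
    have hp : 0 < Δt ^ α := Real.rpow_pos_of_pos hΔt α
    positivity
  have exrec : ∀ m : ℕ, ∃ U : ℕ → GridFun Nh, U N = UN ∧
      ∀ n, N ≤ n + m → n < N → ∀ i j,
        DB α Δt N (fun m' => U m' i j) n - lapl Nh (U n) i j + g i j (Dh Nh (U n) i j)
          = F n i j := by
    intro m
    induction m with
    | zero =>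
      exact ⟨fun _ => UN, rfl, fun n hn hn' => absurd hn (by omega)⟩
    | succ m ih =>
      obtain ⟨U, hUN, hU⟩ := ih
      by_cases hm : N ≤ m
      · exact ⟨U, hUN, fun n hn hn' => hU n (by omega) hn'⟩
      set n0 := N - (m + 1) with hn0def
      have hn0N : n0 < N := by omega
      obtain ⟨W, hW⟩ := HJBaux.stage_exists Nh g hgc hg1 ((rhoA α Δt)⁻¹) hρ
        (fun i j => ∑ k ∈ Finset.Icc (n0 + 1) N, cB α N n0 k * U k i j) (F n0)
      refine ⟨Function.update U n0 W, ?_, ?_⟩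
      · rw [Function.update_of_ne (by omega)]; exact hUN
      · intro n hn hn' i j
        by_cases hcase : N ≤ n + m
        · have hgt : n0 < n := by omega
          have hDB : DB α Δt N (fun m' => Function.update U n0 W m' i j) n
              = DB α Δt N (fun m' => U m' i j) n := by
            simp only [DB]
            rw [Function.update_of_ne (by omega : n ≠ n0)]
            congr 2
            apply Finset.sum_congr rfl
            intro k hk
            rw [Finset.mem_Icc] at hk
            rw [Function.update_of_ne (by omega : k ≠ n0)]
          rw [hDB, Function.update_of_ne (by omega : n ≠ n0)]
          exact hU n hcase hn' i j
        · have hneq : n = n0 := by omega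
          rw [hneq]
          have hDB : DB α Δt N (fun m' => Function.update U n0 W m' i j) n0
              = (rhoA α Δt)⁻¹ * (W i j -
                  ∑ k ∈ Finset.Icc (n0 + 1) N, cB α N n0 k * U k i j) := by
            simp only [DB, Function.update_self]
            congr 2
            apply Finset.sum_congr rfl
            intro k hk
            rw [Finset.mem_Icc] at hk
            rw [Function.update_of_ne (by omega : k ≠ n0)]
          rw [hDB, Function.update_self]
          exact hW i j
  obtain ⟨U, hUN, hU⟩ := exrec N
  refine ⟨U, ⟨hUN, fun n hn i j => hU n (by omega) hn i j⟩, ?_⟩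
  rintro V ⟨hVN, hV⟩
  have uniq : ∀ m n, N ≤ n + m → n ≤ N → V n = U n := by
    intro m
    induction m with
    | zero =>
      intro n h1 h2
      have : n = N := by omega
      subst this
      rw [hVN, hUN]
    | succ m ih =>
      intro n h1 h2
      by_cases hc : N ≤ n + m
      · exact ih n hc h2
      have hnN : n < N := by omega
      have hsum : ∀ i j, ∑ k ∈ Finset.Icc (n + 1) N, cB α N n k * V k i j
          = ∑ k ∈ Finset.Icc (n + 1) N, cB α N n k * U k i j := by
        intro i j
        apply Finset.sum_congr rfl
        intro k hk
        rw [Finset.mem_Icc] at hk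
        rw [ih k (by omega) (by omega)]
      have hXeq : ∀ i j, (rhoA α Δt)⁻¹ *
            (U n i j - ∑ k ∈ Finset.Icc (n + 1) N, cB α N n k * U k i j)
          - lapl Nh (U n) i j + g i j (Dh Nh (U n) i j) = F n i j := by
        intro i j
        exact hU n (by omega) hnN i j
      have hYeq : ∀ i j, (rhoA α Δt)⁻¹ *
            (V n i j - ∑ k ∈ Finset.Icc (n + 1) N, cB α N n k * U k i j)
          - lapl Nh (V n) i j + g i j (Dh Nh (V n) i j) = F n i j := by
        intro i j
        have := hV n hnN i j
        simp only [DB] at this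
        rw [hsum i j] at this
        exact this
      have := HJBaux.stage_unique Nh g hg1 ((rhoA α Δt)⁻¹) hρ
        (fun i j => ∑ k ∈ Finset.Icc (n + 1) N, cB α N n k * U k i j) (F n)
        (U n) (V n) hXeq hYeq
      exact this
  intro n hn
  exact uniq N n (by omega) hn
end
end

section
/- Comparison principle for the discrete backward time-fractional Hamilton–Jacobi–Bellman scheme: Let g be a numerical Hamiltonian continuous in q and satisfying (G1) (nonincreasing in q₁ and q₃, nondecreasing in q₂ and q₄), and let F⁰,…,F^{N−1} be grid functions. If (Uⁿ)_{n=0}^N and (Vⁿ)_{n=0}^N are families of grid functions with Uᴺ_{i,j} ≤ Vᴺ_{i,j} for all (i,j), and for all n = 0,…,N−1 and all (i,j) one has D̄^α_{Δt}Uⁿ_{i,j} − (Δ_hUⁿ)_{i,j} + g(x_{i,j},[D_hUⁿ]_{i,j}) ≤ Fⁿ_{i,j} and D̄^α_{Δt}Vⁿ_{i,j} − (Δ_hVⁿ)_{i,j} + g(x_{i,j},[D_hVⁿ]_{i,j}) ≥ Fⁿ_{i,j}, then Uⁿ_{i,j} ≤ Vⁿ_{i,j} for all n = 0,…,N and all (i,j).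 -/
open Real Finset

noncomputable section

/-- midpoint concavity step for `x ↦ x ^ p`, `p ∈ (0,1)` -/
lemma concave_step {p : ℝ} (hp0 : 0 < p) (hp1 : p < 1) {x : ℝ} (hx : 1 ≤ x) :
    (x + 1) ^ p + (x - 1) ^ p ≤ 2 * x ^ p := by
  have hc := (Real.strictConcaveOn_rpow hp0 hp1).concaveOn
  have h := hc.2 (Set.mem_Ici.2 (by linarith : (0:ℝ) ≤ x - 1))
      (Set.mem_Ici.2 (by linarith : (0:ℝ) ≤ x + 1))
      (by norm_num : (0:ℝ) ≤ 1/2) (by norm_num : (0:ℝ) ≤ 1/2) (by norm_num)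
  simp only [smul_eq_mul] at h
  have hmid : (1/2 : ℝ) * (x - 1) + 1/2 * (x + 1) = x := by ring
  rw [hmid] at h
  linarith

/-- nonnegativity of the backward L1 coefficients -/
lemma cB_nonneg {α : ℝ} (hα0 : 0 < α) (hα1 : α < 1) (N n k : ℕ)
    (h1 : n + 1 ≤ k) (h2 : k ≤ N) : 0 ≤ cB α N n k := by
  have hp0 : 0 < 1 - α := by linarith
  have hp1 : 1 - α < 1 := by linarith
  unfold cB
  by_cases hk : k = N
  · subst hk
    rw [if_pos rfl]
    have hx : (0:ℝ) ≤ (k : ℝ) - 1 - n := by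
      have : (n : ℝ) + 1 ≤ (k : ℝ) := by exact_mod_cast h1
      linarith
    have : ((k:ℝ) - 1 - n) ^ (1-α) ≤ ((k:ℝ) - n) ^ (1-α) :=
      Real.rpow_le_rpow hx (by linarith) hp0.le
    linarith
  · simp only [if_neg hk]
    have hx1 : (1:ℝ) ≤ (k : ℝ) - n := by
      have : (n : ℝ) + 1 ≤ (k : ℝ) := by exact_mod_cast h1
      linarith
    have h := concave_step hp0 hp1 hx1
    have e1 : (k:ℝ) + 1 - n = ((k:ℝ) - n) + 1 := by ring
    have e2 : (k:ℝ) - 1 - n = ((k:ℝ) - n) - 1 := by ring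
    rw [e1, e2]
    linarith

/-- monotonicity consequence of (G1) -/
lemma G1_compare {g : (Fin 4 → ℝ) → ℝ} (hg : G1 g) {a b : Fin 4 → ℝ}
    (h0 : a 0 ≤ b 0) (h1 : b 1 ≤ a 1) (h2 : a 2 ≤ b 2) (h3 : b 3 ≤ a 3) :
    g b ≤ g a := by
  obtain ⟨H0, H1, H2, H3⟩ := hg
  set b3 := Function.update b 3 (a 3) with hb3
  set b2 := Function.update b3 2 (a 2) with hb2
  set b1 := Function.update b2 1 (a 1) with hb1
  set b0 := Function.update b1 0 (a 0) with hb0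
  have s3 : g b ≤ g b3 := by
    have := H3 b h3
    simpa [Function.update_eq_self] using this
  have s2 : g b3 ≤ g b2 := by
    have hle : a 2 ≤ b3 2 := by simp [hb3, Function.update]; exact h2
    have := H2 b3 hle
    simpa [Function.update_eq_self] using this
  have s1 : g b2 ≤ g b1 := by
    have hle : b2 1 ≤ a 1 := by
      have : b2 1 = b 1 := by simp [hb2, hb3, Function.update]
      rw [this]; exact h1
    have := H1 b2 hle
    simpa [Function.update_eq_self] using this
  have s0 : g b1 ≤ g b0 := by
    have hle : a 0 ≤ b1 0 := by
      have : b1 0 = b 0 := by simp [hb1, hb2, hb3, Function.update]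
      rw [this]; exact h0
    have := H0 b1 hle
    simpa [Function.update_eq_self] using this
  have hba : b0 = a := by
    funext i
    fin_cases i <;> simp [hb0, hb1, hb2, hb3, Function.update]
  calc g b ≤ g b3 := s3
    _ ≤ g b2 := s2
    _ ≤ g b1 := s1
    _ ≤ g b0 := s0
    _ = g a := by rw [hba]

/-- Comparison principle for the discrete backward time-fractional HJB scheme. -/
theorem HJB_comparison_principle (α Δt : ℝ) (hα : α ∈ Set.Ioo (0 : ℝ) 1)
    (hΔt : 0 < Δt) (N Nh : ℕ) [NeZero Nh]
    (g : ZMod Nh → ZMod Nh → (Fin 4 → ℝ) → ℝ)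
    (hgc : ∀ i j, Continuous (g i j)) (hg1 : ∀ i j, G1 (g i j))
    (F : ℕ → GridFun Nh) (U V : ℕ → GridFun Nh)
    (hterm : ∀ i j, U N i j ≤ V N i j)
    (hsub : ∀ n < N, ∀ i j,
      DB α Δt N (fun m => U m i j) n - lapl Nh (U n) i j
        + g i j (Dh Nh (U n) i j) ≤ F n i j)
    (hsup : ∀ n < N, ∀ i j,
      F n i j ≤ DB α Δt N (fun m => V m i j) n - lapl Nh (V n) i j
        + g i j (Dh Nh (V n) i j)) :
    ∀ n ≤ N, ∀ i j, U n i j ≤ V n i j := by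
  obtain ⟨hα0, hα1⟩ := hα
  have hNh : 0 < (Nh : ℝ) := by
    exact_mod_cast Nat.pos_of_ne_zero (NeZero.ne Nh)
  have hh : 0 < hstep Nh := by
    unfold hstep; positivity
  have hρ : 0 < rhoA α Δt := by
    unfold rhoA
    have hΓ : 0 < Real.Gamma (2 - α) := Real.Gamma_pos_of_pos (by linarith)
    positivity
  suffices H : ∀ d n, N = n + d → ∀ i j, U n i j ≤ V n i j by
    intro n hn i j
    exact H (N - n) n (by omega) i j
  intro d
  induction d using Nat.strong_induction_on with
  | _ d IH =>
    intro n hnd i j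
    rcases Nat.eq_zero_or_pos d with rfl | hd
    · have : n = N := by omega
      subst this
      exact hterm i j
    · have hnN : n < N := by omega
      have hprev : ∀ k, n < k → k ≤ N → ∀ i j, U k i j ≤ V k i j := by
        intro k hk1 hk2 i j
        exact IH (N - k) (by omega) k (by omega) i j
      obtain ⟨⟨i0, j0⟩, hmax⟩ :=
        Finite.exists_max (fun p : ZMod Nh × ZMod Nh => U n p.1 p.2 - V n p.1 p.2)
      simp only at hmax
      have key : U n i0 j0 - V n i0 j0 ≤ 0 := by
        have hU := hsub n hnN i0 j0
        have hV := hsup n hnN i0 j0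
        -- Hamiltonian comparison at the max point
        have hg : g i0 j0 (Dh Nh (V n) i0 j0) ≤ g i0 j0 (Dh Nh (U n) i0 j0) := by
          apply G1_compare (hg1 i0 j0)
          · show Dh Nh (U n) i0 j0 0 ≤ Dh Nh (V n) i0 j0 0
            simp [Dh, D1p]
            have := hmax (i0 + 1, j0)
            have h' := hmax (i0, j0)
            apply div_le_div_of_nonneg_right ?_ hh.le <;> try linarith
          · show Dh Nh (V n) i0 j0 1 ≤ Dh Nh (U n) i0 j0 1
            simp [Dh, D1p, sub_add_cancel]
            have := hmax (i0 - 1, j0)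
            apply div_le_div_of_nonneg_right ?_ hh.le <;> try linarith
          · show Dh Nh (U n) i0 j0 2 ≤ Dh Nh (V n) i0 j0 2
            simp [Dh, D2p]
            have := hmax (i0, j0 + 1)
            apply div_le_div_of_nonneg_right ?_ hh.le <;> try linarith
          · show Dh Nh (V n) i0 j0 3 ≤ Dh Nh (U n) i0 j0 3
            simp [Dh, D2p, sub_add_cancel]
            have := hmax (i0, j0 - 1)
            apply div_le_div_of_nonneg_right ?_ hh.le <;> try linarith
        -- Laplacian comparison at the max point
        have hlap : lapl Nh (U n) i0 j0 - lapl Nh (V n) i0 j0 ≤ 0 := by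
          have h1 := hmax (i0 + 1, j0)
          have h2 := hmax (i0 - 1, j0)
          have h3 := hmax (i0, j0 + 1)
          have h4 := hmax (i0, j0 - 1)
          unfold lapl
          rw [div_sub_div_same]
          apply div_nonpos_of_nonpos_of_nonneg
          · linarith
          · positivity
        have hDBle : DB α Δt N (fun m => U m i0 j0) n
            - DB α Δt N (fun m => V m i0 j0) n ≤ 0 := by linarith
        unfold DB at hDBle
        rw [← mul_sub] at hDBle
        have hρinv : 0 < (rhoA α Δt)⁻¹ := inv_pos.2 hρ
        have hfac : (U n i0 j0 - ∑ k ∈ Finset.Icc (n + 1) N, cB α N n k * U k i0 j0)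
            - (V n i0 j0 - ∑ k ∈ Finset.Icc (n + 1) N, cB α N n k * V k i0 j0) ≤ 0 := by
          by_contra hpos
          push_neg at hpos
          nlinarith
        have hsumeq : ∑ k ∈ Finset.Icc (n + 1) N, cB α N n k * U k i0 j0
            - ∑ k ∈ Finset.Icc (n + 1) N, cB α N n k * V k i0 j0
            = ∑ k ∈ Finset.Icc (n + 1) N, cB α N n k * (U k i0 j0 - V k i0 j0) := by
          rw [← Finset.sum_sub_distrib]
          exact Finset.sum_congr rfl fun k _ => (mul_sub _ _ _).symm
        have hsumle : ∑ k ∈ Finset.Icc (n + 1) N,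
            cB α N n k * (U k i0 j0 - V k i0 j0) ≤ 0 := by
          apply Finset.sum_nonpos
          intro k hk
          obtain ⟨hk1, hk2⟩ := Finset.mem_Icc.1 hk
          have hc := cB_nonneg hα0 hα1 N n k hk1 hk2
          have hw : U k i0 j0 - V k i0 j0 ≤ 0 := by
            have := hprev k (by omega) hk2 i0 j0
            linarith
          exact mul_nonpos_of_nonneg_of_nonpos hc hw
        linarith
      have := hmax (i, j)
      linarith
end
end

section
/- Existence and uniqueness for the discrete forward time-fractional Fokker–Planck scheme: Let g be a numerical Hamiltonian, C¹ in q and satisfying (G1) (nonincreasing in q₁ and q₃, nondecreasing in q₂ and q₄), let (Uⁿ)_{n=0}^{N−1} be given grid functions, and let M⁰ be a given grid function. Then there exists δ > 0 (depending on h and on the partial derivatives of g along [D_hUⁿ]) such that for all Δt < δ, there exists a unique family of grid functions (Mⁿ)_{n=1}^N satisfying D^α_{Δt}M^{n+1}_{i,j} − (Δ_hM^{n+1})_{i,j} − B_{i,j}(Uⁿ, M^{n+1}) = 0 for all n = 0,…,N−1 and all (i,j). -/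
open Real Finset

noncomputable section

/-- auxiliary: prefix-recursive sequence builder -/
noncomputable def seqAux {G : Type*} (a : G) (step : ℕ → (ℕ → G) → G) : ℕ → ℕ → G
  | 0 => fun _ => a
  | n + 1 => fun k => if k ≤ n then seqAux a step n k else step n (seqAux a step n)

lemma seqAux_agree {G : Type*} (a : G) (step : ℕ → (ℕ → G) → G) :
    ∀ n k, k ≤ n → seqAux a step n k = seqAux a step k k := by
  intro n
  induction n with
  | zero => intro k hk; interval_cases k; rfl
  | succ n ih =>
    intro k hk
    rcases le_or_gt k n with h | h
    · rw [show seqAux a step (n + 1) k = seqAux a step n k by simp [seqAux, h], ih k h]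
    · have : k = n + 1 := by omega
      subst this; rfl


set_option maxHeartbeats 2000000 in
/-- Existence and uniqueness for the discrete forward time-fractional
Fokker-Planck scheme, for `Δt` sufficiently small. -/
theorem FP_existence_uniqueness (α : ℝ) (hα : α ∈ Set.Ioo (0 : ℝ) 1)
    (N Nh : ℕ) [NeZero Nh]
    (g : ZMod Nh → ZMod Nh → (Fin 4 → ℝ) → ℝ)
    (hgC1 : ∀ i j, ContDiff ℝ 1 (g i j)) (hg1 : ∀ i j, G1 (g i j))
    (U : ℕ → GridFun Nh) (M0 : GridFun Nh) :
    ∃ δ > 0, ∀ Δt : ℝ, 0 < Δt → Δt < δ →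
      ∃ M : ℕ → GridFun Nh,
        (M 0 = M0 ∧ ∀ n < N, ∀ i j,
          DF α Δt (fun m => M m i j) (n + 1) - lapl Nh (M (n + 1)) i j
            - Bop Nh g (U n) (M (n + 1)) i j = 0) ∧
        ∀ M' : ℕ → GridFun Nh,
          (M' 0 = M0 ∧ ∀ n < N, ∀ i j,
            DF α Δt (fun m => M' m i j) (n + 1) - lapl Nh (M' (n + 1)) i j
              - Bop Nh g (U n) (M' (n + 1)) i j = 0) →
          ∀ n ≤ N, M' n = M n := by
  obtain ⟨hα0, hα1⟩ := hα
  have hGamma : 0 < Real.Gamma (2 - α) := Real.Gamma_pos_of_pos (by linarith)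
  set Aℓ : ℕ → (GridFun Nh →ₗ[ℝ] GridFun Nh) := fun n =>
    { toFun := fun M i j => lapl Nh M i j + Bop Nh g (U n) M i j
      map_add' := by
        intro M M'; funext i j
        simp only [lapl, Bop, Pi.add_apply]
        ring
      map_smul' := by
        intro c M; funext i j
        simp only [lapl, Bop, Pi.smul_apply, smul_eq_mul, RingHom.id_apply]
        ring } with hAl
  set A : ℕ → (GridFun Nh →L[ℝ] GridFun Nh) :=
    fun n => LinearMap.toContinuousLinearMap (Aℓ n) with hA
  have hAapp : ∀ n (W : GridFun Nh) i j,
      (A n) W i j = lapl Nh W i j + Bop Nh g (U n) W i j := fun n W i j => rfl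
  set C : ℝ := 1 + ∑ n ∈ Finset.range N, ‖A n‖ with hCdef
  have hCpos : 0 < C := by
    have : 0 ≤ ∑ n ∈ Finset.range N, ‖A n‖ :=
      Finset.sum_nonneg fun n _ => norm_nonneg _
    rw [hCdef]; linarith
  have hAle : ∀ n < N, ‖A n‖ ≤ C := by
    intro n hn
    have h1 : ‖A n‖ ≤ ∑ m ∈ Finset.range N, ‖A m‖ :=
      Finset.single_le_sum (fun m _ => norm_nonneg _) (Finset.mem_range.mpr hn)
    rw [hCdef]; linarith
  refine ⟨(Real.Gamma (2 - α) * C)⁻¹ ^ (1 / α),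
    Real.rpow_pos_of_pos (by positivity) _, ?_⟩
  intro Δt hΔt hΔtδ
  set ρ := rhoA α Δt with hρdef
  have hρpos : 0 < ρ := mul_pos hGamma (Real.rpow_pos_of_pos hΔt _)
  have hρne : ρ ≠ 0 := ne_of_gt hρpos
  have hρlt : ρ * C < 1 := by
    have h1 : Δt ^ α < (Real.Gamma (2 - α) * C)⁻¹ := by
      have h2 := Real.rpow_lt_rpow (le_of_lt hΔt) hΔtδ hα0
      rwa [← Real.rpow_mul (by positivity), one_div_mul_cancel (ne_of_gt hα0),
        Real.rpow_one] at h2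
    have h3 : ρ < Real.Gamma (2 - α) * (Real.Gamma (2 - α) * C)⁻¹ := by
      rw [hρdef, rhoA]
      exact mul_lt_mul_of_pos_left h1 hGamma
    have h4 : Real.Gamma (2 - α) * (Real.Gamma (2 - α) * C)⁻¹ * C = 1 := by
      field_simp
    have h5 : ρ * C < Real.Gamma (2 - α) * (Real.Gamma (2 - α) * C)⁻¹ * C :=
      mul_lt_mul_of_pos_right h3 hCpos
    rw [h4] at h5; exact h5
  have hlt : ∀ n, n < N → ‖ρ • A n‖ < 1 := by
    intro n hn
    rw [norm_smul ρ (A n), Real.norm_eq_abs, abs_of_pos hρpos]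
    calc ρ * ‖A n‖ ≤ ρ * C := mul_le_mul_of_nonneg_left (hAle n hn) hρpos.le
      _ < 1 := hρlt
  set stepF : ℕ → (ℕ → GridFun Nh) → GridFun Nh := fun n f =>
    if h : ‖ρ • A n‖ < 1 then
      ((Units.oneSub (ρ • A n) h)⁻¹).val
        (∑ k ∈ Finset.range (n + 1), cF α (n + 1) k • f k)
    else fun _ _ => 0 with hstepF
  set Msol : ℕ → GridFun Nh := fun n => seqAux M0 stepF n n with hMsol
  have hM0 : Msol 0 = M0 := rfl
  have hagree : ∀ n k, k ≤ n → seqAux M0 stepF n k = Msol k := by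
    intro n k hk; rw [seqAux_agree M0 stepF n k hk]
  have hMsucc : ∀ n, ∀ hn : n < N, Msol (n + 1) =
      ((Units.oneSub (ρ • A n) (hlt n hn))⁻¹).val
        (∑ k ∈ Finset.range (n + 1), cF α (n + 1) k • Msol k) := by
    intro n hn
    have h1 : Msol (n + 1) = stepF n (seqAux M0 stepF n) := by
      rw [hMsol]; simp [seqAux]
    rw [h1, hstepF]
    simp only [dif_pos (hlt n hn)]
    congr 1
    refine Finset.sum_congr rfl fun k hk => ?_
    rw [hagree n k (Nat.lt_succ_iff.mp (Finset.mem_range.mp hk))]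
  -- key equivalence between the scheme and the fixed-point equation
  have key : ∀ n, n < N → ∀ W : ℕ → GridFun Nh,
      (∀ i j : ZMod Nh, DF α Δt (fun m => W m i j) (n + 1) - lapl Nh (W (n + 1)) i j
          - Bop Nh g (U n) (W (n + 1)) i j = 0) ↔
      ((1 - ρ • A n) (W (n + 1)) =
        ∑ k ∈ Finset.range (n + 1), cF α (n + 1) k • W k) := by
    intro n hn W
    have hptwise : ∀ i j : ZMod Nh,
        ((1 - ρ • A n) (W (n + 1))) i j =
          W (n + 1) i j - ρ * (lapl Nh (W (n + 1)) i j + Bop Nh g (U n) (W (n + 1)) i j) := by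
      intro i j
      rw [ContinuousLinearMap.sub_apply, ContinuousLinearMap.one_apply,
        ContinuousLinearMap.smul_apply]
      rw [Pi.sub_apply, Pi.sub_apply, Pi.smul_apply, Pi.smul_apply, smul_eq_mul,
        hAapp n (W (n + 1)) i j]
    have hsum : ∀ i j : ZMod Nh,
        (∑ k ∈ Finset.range (n + 1), cF α (n + 1) k • W k) i j =
          ∑ k ∈ Finset.range (n + 1), cF α (n + 1) k * W k i j := by
      intro i j
      rw [Finset.sum_apply]
      rw [Finset.sum_apply]
      exact Finset.sum_congr rfl fun k _ => rfl
    constructor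
    · intro h
      funext i j
      have h2 := h i j
      rw [DF] at h2
      rw [← hρdef] at h2
      rw [hptwise i j, hsum i j]
      set X := W (n + 1) i j
      set S := ∑ k ∈ Finset.range (n + 1), cF α (n + 1) k * W k i j
      set L := lapl Nh (W (n + 1)) i j + Bop Nh g (U n) (W (n + 1)) i j with hL
      have h4 : ρ⁻¹ * (X - S) = L := by rw [hL]; linarith
      have h5 : X - S = ρ * L := by
        rw [← h4]; field_simp
      linarith
    · intro h
      intro i j
      have h2 := congrFun (congrFun h i) j
      rw [hptwise i j, hsum i j] at h2
      rw [DF, ← hρdef]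
      set X := W (n + 1) i j
      set S := ∑ k ∈ Finset.range (n + 1), cF α (n + 1) k * W k i j
      set L := lapl Nh (W (n + 1)) i j + Bop Nh g (U n) (W (n + 1)) i j with hL
      have h5 : ρ⁻¹ * (X - S) = L := by
        rw [show X - S = ρ * L by linarith]
        field_simp
      rw [hL] at h5; linarith
  -- the scheme holds for Msol
  have hscheme : ∀ n, n < N → ∀ i j : ZMod Nh,
      DF α Δt (fun m => Msol m i j) (n + 1) - lapl Nh (Msol (n + 1)) i j
        - Bop Nh g (U n) (Msol (n + 1)) i j = 0 := by
    intro n hn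
    refine (key n hn Msol).mpr ?_
    rw [hMsucc n hn]
    show (Units.oneSub (ρ • A n) (hlt n hn)).val
        (((Units.oneSub (ρ • A n) (hlt n hn))⁻¹).val
          (∑ k ∈ Finset.range (n + 1), cF α (n + 1) k • Msol k)) = _
    calc (Units.oneSub (ρ • A n) (hlt n hn)).val
          (((Units.oneSub (ρ • A n) (hlt n hn))⁻¹).val
            (∑ k ∈ Finset.range (n + 1), cF α (n + 1) k • Msol k))
        = ((Units.oneSub (ρ • A n) (hlt n hn)).val *
            ((Units.oneSub (ρ • A n) (hlt n hn))⁻¹).val)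
            (∑ k ∈ Finset.range (n + 1), cF α (n + 1) k • Msol k) := rfl
      _ = ∑ k ∈ Finset.range (n + 1), cF α (n + 1) k • Msol k := by
          rw [Units.mul_inv]; rfl
  refine ⟨Msol, ⟨hM0, hscheme⟩, ?_⟩
  rintro M' ⟨hM'0, hM'eq⟩
  intro n
  induction n using Nat.strong_induction_on with
  | _ n ih =>
    intro hnN
    match n with
    | 0 => rw [hM'0, hM0]
    | Nat.succ m =>
      have hm : m < N := by omega
      have e1 := (key m hm M').mp (hM'eq m hm)
      have e2 := (key m hm Msol).mp (hscheme m hm)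
      have hsumeq : ∑ k ∈ Finset.range (m + 1), cF α (m + 1) k • M' k =
          ∑ k ∈ Finset.range (m + 1), cF α (m + 1) k • Msol k := by
        refine Finset.sum_congr rfl fun k hk => ?_
        have hk' : k < m + 1 := Finset.mem_range.mp hk
        rw [ih k hk' (by omega)]
      rw [hsumeq, ← e2] at e1
      -- injectivity of the unit
      have hinj : ∀ x y : GridFun Nh,
          (Units.oneSub (ρ • A m) (hlt m hm)).val x =
            (Units.oneSub (ρ • A m) (hlt m hm)).val y → x = y := by
        intro x y hxy
        have h6 := congrArg ((Units.oneSub (ρ • A m) (hlt m hm))⁻¹).val hxy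
        calc x = (((Units.oneSub (ρ • A m) (hlt m hm))⁻¹).val *
              (Units.oneSub (ρ • A m) (hlt m hm)).val) x := by
              rw [Units.inv_mul]; rfl
          _ = (((Units.oneSub (ρ • A m) (hlt m hm))⁻¹).val *
              (Units.oneSub (ρ • A m) (hlt m hm)).val) y := h6
          _ = y := by rw [Units.inv_mul]; rfl
      exact hinj _ _ e1
end
end

section
/- Discrete fractional integration by parts: Fix α ∈ (0,1), Δt > 0, an integer N ≥ 1, and set ρ_α := Γ(2−α)·Δt^α. For any two families of grid functions U = (Uⁿ)_{n=0}^N and M = (Mⁿ)_{n=0}^N, one has Σ_{n=0}^{N−1} (D̄^α_{Δt}Uⁿ, M^{n+1})₂ + ρ_α^{−1} Σ_{n=0}^{N−1} c̄_n^N (Uᴺ, M^{n+1})₂ = Σ_{n=0}^{N−1} (D^α_{Δt}M^{n+1}, Uⁿ)₂ + ρ_α^{−1} Σ_{n=0}^{N−1} c_0^{n+1} (M⁰, Uⁿ)₂. -/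
open Real Finset

noncomputable section

lemma inner2_comm' (Nh : ℕ) [NeZero Nh] (A B : GridFun Nh) :
    inner2 Nh A B = inner2 Nh B A := by
  simp [inner2, mul_comm]

lemma inner2_aux (Nh : ℕ) [NeZero Nh] (a : ℝ) (f V : GridFun Nh) (s : Finset ℕ)
    (c : ℕ → ℝ) (g : ℕ → GridFun Nh) :
    inner2 Nh (fun i j => a * (f i j - ∑ k ∈ s, c k * g k i j)) V
      = a * (inner2 Nh f V - ∑ k ∈ s, c k * inner2 Nh (g k) V) := by
  have pt : ∀ i j : ZMod Nh, (a * (f i j - ∑ k ∈ s, c k * g k i j)) * V i j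
      = a * (f i j * V i j) - a * ∑ k ∈ s, c k * (g k i j * V i j) := by
    intro i j
    have hS : (∑ k ∈ s, c k * g k i j) * V i j = ∑ k ∈ s, c k * (g k i j * V i j) := by
      rw [Finset.sum_mul]; exact Finset.sum_congr rfl fun k _ => by ring
    rw [mul_assoc, sub_mul, hS, mul_sub]
  simp only [inner2, pt, Finset.sum_sub_distrib, ← Finset.mul_sum]
  have swap : ∑ i : ZMod Nh, ∑ j : ZMod Nh, ∑ k ∈ s, c k * (g k i j * V i j)
      = ∑ k ∈ s, c k * ∑ i : ZMod Nh, ∑ j : ZMod Nh, g k i j * V i j := by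
    calc ∑ i : ZMod Nh, ∑ j : ZMod Nh, ∑ k ∈ s, c k * (g k i j * V i j)
        = ∑ i : ZMod Nh, ∑ k ∈ s, ∑ j : ZMod Nh, c k * (g k i j * V i j) :=
          Finset.sum_congr rfl fun i _ => Finset.sum_comm
      _ = ∑ k ∈ s, ∑ i : ZMod Nh, ∑ j : ZMod Nh, c k * (g k i j * V i j) := Finset.sum_comm
      _ = ∑ k ∈ s, c k * ∑ i : ZMod Nh, ∑ j : ZMod Nh, g k i j * V i j := by
          refine Finset.sum_congr rfl fun k _ => ?_
          simp only [Finset.mul_sum]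
  rw [swap]
  have hpull : ∑ k ∈ s, c k * (hstep Nh ^ 2 * ∑ i : ZMod Nh, ∑ j : ZMod Nh, g k i j * V i j)
      = hstep Nh ^ 2 * ∑ k ∈ s, c k * ∑ i : ZMod Nh, ∑ j : ZMod Nh, g k i j * V i j := by
    rw [Finset.mul_sum]; exact Finset.sum_congr rfl fun k _ => by ring
  rw [hpull]; ring

lemma coeff_eq (α : ℝ) (N a b : ℕ) (ha : a ≠ N) : cB α N b a = cF α (a + 1) (b + 1) := by
  rw [cB, cF, if_neg ha, if_neg (Nat.succ_ne_zero b)]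
  push_cast
  ring_nf

lemma core_swap (α : ℝ) (N : ℕ) (hN : 1 ≤ N) (Q : ℕ → ℕ → ℝ) :
    ∑ n ∈ Finset.range N, ∑ k ∈ Finset.Icc (n+1) (N-1), cB α N n k * Q k (n+1)
      = ∑ n ∈ Finset.range N, ∑ k ∈ Finset.range n, cF α (n+1) (k+1) * Q n (k+1) := by
  have hsub : Finset.Icc 1 (N-1) ⊆ Finset.range N := by
    intro a ha; simp only [Finset.mem_range, Finset.mem_Icc] at ha ⊢; omega
  have hz : ∀ a ∈ Finset.range N, a ∉ Finset.Icc 1 (N-1) →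
      (∑ b ∈ Finset.range a, cF α (a+1) (b+1) * Q a (b+1)) = 0 := by
    intro a ha hna
    have h0 : a = 0 := by
      simp only [Finset.mem_range] at ha
      simp only [Finset.mem_Icc, not_and_or, not_le] at hna
      omega
    subst h0; simp
  calc ∑ n ∈ Finset.range N, ∑ k ∈ Finset.Icc (n+1) (N-1), cB α N n k * Q k (n+1)
      = ∑ a ∈ Finset.Icc 1 (N-1), ∑ b ∈ Finset.range a, cB α N b a * Q a (b+1) :=
        Finset.sum_comm' (by intro n k; simp only [Finset.mem_range, Finset.mem_Icc]; omega)
    _ = ∑ a ∈ Finset.Icc 1 (N-1), ∑ b ∈ Finset.range a, cF α (a+1) (b+1) * Q a (b+1) := by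
        refine Finset.sum_congr rfl fun a ha => Finset.sum_congr rfl fun b _ => ?_
        simp only [Finset.mem_Icc] at ha
        rw [coeff_eq α N a b (by omega)]
    _ = ∑ n ∈ Finset.range N, ∑ k ∈ Finset.range n, cF α (n+1) (k+1) * Q n (k+1) :=
        Finset.sum_subset hsub hz

lemma key_ibp (α r : ℝ) (N : ℕ) (hN : 1 ≤ N) (Q : ℕ → ℕ → ℝ) :
    (∑ n ∈ Finset.range N, r * (Q n (n+1) - ∑ k ∈ Finset.Icc (n+1) N, cB α N n k * Q k (n+1)))
      + r * ∑ n ∈ Finset.range N, cB α N n N * Q N (n+1)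
    = (∑ n ∈ Finset.range N,
          r * (Q n (n+1) - ∑ k ∈ Finset.range (n+1), cF α (n+1) k * Q n k))
      + r * ∑ n ∈ Finset.range N, cF α (n+1) 0 * Q n 0 := by
  have hNe : N - 1 + 1 = N := by omega
  have hL : ∀ n ∈ Finset.range N, ∑ k ∈ Finset.Icc (n+1) N, cB α N n k * Q k (n+1)
      = (∑ k ∈ Finset.Icc (n+1) (N-1), cB α N n k * Q k (n+1)) + cB α N n N * Q N (n+1) := by
    intro n hn
    simp only [Finset.mem_range] at hn
    conv_lhs => rw [← hNe]
    rw [Finset.sum_Icc_succ_top (by omega), hNe]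
  have hR : ∀ n : ℕ, ∑ k ∈ Finset.range (n+1), cF α (n+1) k * Q n k
      = (∑ k ∈ Finset.range n, cF α (n+1) (k+1) * Q n (k+1)) + cF α (n+1) 0 * Q n 0 :=
    fun n => Finset.sum_range_succ' _ n
  have e1 : ∑ n ∈ Finset.range N,
        r * (Q n (n+1) - ∑ k ∈ Finset.Icc (n+1) N, cB α N n k * Q k (n+1))
      = ∑ n ∈ Finset.range N,
        (r * (Q n (n+1) - ∑ k ∈ Finset.Icc (n+1) (N-1), cB α N n k * Q k (n+1))
          - r * (cB α N n N * Q N (n+1))) := by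
    refine Finset.sum_congr rfl fun n hn => ?_
    rw [hL n hn]; ring
  have e2 : ∑ n ∈ Finset.range N,
        r * (Q n (n+1) - ∑ k ∈ Finset.range (n+1), cF α (n+1) k * Q n k)
      = ∑ n ∈ Finset.range N,
        (r * (Q n (n+1) - ∑ k ∈ Finset.range n, cF α (n+1) (k+1) * Q n (k+1))
          - r * (cF α (n+1) 0 * Q n 0)) := by
    refine Finset.sum_congr rfl fun n _ => ?_
    rw [hR n]; ring
  rw [e1, e2, Finset.sum_sub_distrib, Finset.sum_sub_distrib, Finset.mul_sum, Finset.mul_sum]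
  have e3 : ∑ n ∈ Finset.range N,
        r * (Q n (n+1) - ∑ k ∈ Finset.Icc (n+1) (N-1), cB α N n k * Q k (n+1))
      = ∑ n ∈ Finset.range N,
        r * (Q n (n+1) - ∑ k ∈ Finset.range n, cF α (n+1) (k+1) * Q n (k+1)) := by
    simp only [mul_sub, Finset.sum_sub_distrib, ← Finset.mul_sum, core_swap α N hN Q]
  rw [e3]; ring

/-- Discrete fractional integration by parts for the L1 forward/backward
discrete Caputo derivatives. -/
theorem discrete_fractional_integration_by_parts (α Δt : ℝ)
    (hα : α ∈ Set.Ioo (0 : ℝ) 1) (hΔt : 0 < Δt)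
    (N : ℕ) (hN : 1 ≤ N) (Nh : ℕ) [NeZero Nh] (U M : ℕ → GridFun Nh) :
    (∑ n ∈ Finset.range N,
        inner2 Nh (fun i j => DB α Δt N (fun m => U m i j) n) (M (n + 1)))
      + (rhoA α Δt)⁻¹ * ∑ n ∈ Finset.range N, cB α N n N * inner2 Nh (U N) (M (n + 1))
    = (∑ n ∈ Finset.range N,
        inner2 Nh (fun i j => DF α Δt (fun m => M m i j) (n + 1)) (U n))
      + (rhoA α Δt)⁻¹ * ∑ n ∈ Finset.range N, cF α (n + 1) 0 * inner2 Nh (M 0) (U n) := by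
  have hc : ∀ a b : ℕ, inner2 Nh (M a) (U b) = inner2 Nh (U b) (M a) :=
    fun a b => inner2_comm' Nh _ _
  simp only [DB, DF, inner2_aux, hc]
  exact key_ibp α (rhoA α Δt)⁻¹ N hN (fun a b => inner2 Nh (U a) (M b))
end
end

section
/- Discrete barrier inequality for the backward Caputo derivative: Fix α ∈ (0,1), Δt > 0, an integer N ≥ 1, and define ωᵏ := ((N−k)Δt)^α for k = 0,…,N. Then for every n = 0,…,N−1 the discrete backward Caputo derivative satisfies D̄^α_{Δt}ωⁿ = ρ_α^{−1}(ωⁿ − Σ_{k=n+1}^{N} c̄_n^k ω^k) ≥ α(1−α)/Γ(2−α). -/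
open Real Finset

noncomputable section

/-- Bernoulli-type estimate: `(1-α) x^(-α) ≤ x^(1-α) - (x-1)^(1-α)` for `x ≥ 1`. -/
lemma bern_aux {α : ℝ} (hα : α ∈ Set.Ioo (0 : ℝ) 1) {x : ℝ} (hx : 1 ≤ x) :
    (1 - α) * x ^ (-α) ≤ x ^ (1 - α) - (x - 1) ^ (1 - α) := by
  obtain ⟨hα0, hα1⟩ := hα
  have hx0 : (0 : ℝ) < x := lt_of_lt_of_le one_pos hx
  have hs : (-1 : ℝ) ≤ -1 / x := by
    rw [neg_div, neg_le_neg_iff]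
    exact div_le_one_of_le₀ hx hx0.le
  have hB : (1 + -1 / x) ^ (1 - α) ≤ 1 + (1 - α) * (-1 / x) :=
    rpow_one_add_le_one_add_mul_self hs (by linarith) (by linarith)
  have hfac : x - 1 = x * (1 + -1 / x) := by field_simp; ring
  have h1x : (0 : ℝ) ≤ 1 + -1 / x := by
    have h : -1 / x ≤ 0 := by
      rw [neg_div]
      exact neg_nonpos_of_nonneg (by positivity)
    linarith [hs]
  have hxp : (0 : ℝ) ≤ x ^ (1 - α) := (Real.rpow_pos_of_pos hx0 _).le
  have key : (x - 1) ^ (1 - α) ≤ x ^ (1 - α) * (1 + (1 - α) * (-1 / x)) := by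
    rw [hfac, Real.mul_rpow hx0.le h1x]
    exact mul_le_mul_of_nonneg_left hB hxp
  have h5 : x ^ (1 - α) / x = x ^ (-α) := by
    have h6 := Real.rpow_sub hx0 (1 - α) 1
    rw [Real.rpow_one] at h6
    rw [← h6]
    congr 1
    ring
  have key2 : x ^ (1 - α) * (1 + (1 - α) * (-1 / x)) =
      x ^ (1 - α) - (1 - α) * x ^ (-α) := by
    rw [← h5]
    field_simp
    ring
  linarith [key, key2.ge, key2.le]

/-- concavity: `(x+2)^(1-α) + x^(1-α) ≤ 2 (x+1)^(1-α)` for `x ≥ 0`. -/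
lemma conc_aux {α : ℝ} (hα : α ∈ Set.Ioo (0 : ℝ) 1) {x : ℝ} (hx : 0 ≤ x) :
    (x + 2) ^ (1 - α) + x ^ (1 - α) ≤ 2 * (x + 1) ^ (1 - α) := by
  obtain ⟨hα0, hα1⟩ := hα
  have h0 : (0 : ℝ) ≤ 1 / 2 := by norm_num
  have hab : (1 / 2 : ℝ) + 1 / 2 = 1 := by norm_num
  have hc := (Real.concaveOn_rpow (p := 1 - α) (by linarith) (by linarith)).2
    (Set.mem_Ici.mpr hx) (Set.mem_Ici.mpr (by linarith : (0 : ℝ) ≤ x + 2)) h0 h0 hab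
  have h : (1 / 2 : ℝ) • x + (1 / 2 : ℝ) • (x + 2) = x + 1 := by
    simp only [smul_eq_mul]; ring
  rw [h] at hc
  simp only [smul_eq_mul] at hc
  linarith

/-- Discrete barrier inequality for the backward discrete Caputo derivative of
`ω^k = ((N-k)Δt)^α`. -/
theorem discrete_barrier_inequality (α Δt : ℝ) (hα : α ∈ Set.Ioo (0 : ℝ) 1)
    (hΔt : 0 < Δt) (N : ℕ) (hN : 1 ≤ N) :
    ∀ n < N, α * (1 - α) / Real.Gamma (2 - α)
      ≤ DB α Δt N (fun k => (((N : ℝ) - (k : ℝ)) * Δt) ^ α) n := by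
  intro n hn
  obtain ⟨hα0, hα1⟩ := hα
  obtain ⟨M, rfl⟩ : ∃ M, N = n + M + 1 := ⟨N - n - 1, by omega⟩
  have hΓ : 0 < Real.Gamma (2 - α) := Real.Gamma_pos_of_pos (by linarith)
  have hD : (0 : ℝ) < Δt ^ α := Real.rpow_pos_of_pos hΔt α
  set g : ℕ → ℝ := fun i => ((i : ℝ) + 1) ^ (1 - α) - (i : ℝ) ^ (1 - α) with hg
  rw [DB, rhoA]
  have hIcc : Finset.Icc (n + 1) (n + M + 1) = Finset.Ico (n + 1) (n + M + 2) := by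
    rw [← Finset.Ico_add_one_right_eq_Icc]; rfl
  rw [hIcc, Finset.sum_Ico_eq_sum_range]
  have hrange : n + M + 2 - (n + 1) = M + 1 := by omega
  rw [hrange, Finset.sum_range_succ]
  have htop : cB α (n + M + 1) n (n + 1 + M) *
      ((((n + M + 1 : ℕ) : ℝ) - ((n + 1 + M : ℕ) : ℝ)) * Δt) ^ α = 0 := by
    have e : (((n + M + 1 : ℕ) : ℝ) - ((n + 1 + M : ℕ) : ℝ)) * Δt = 0 := by
      push_cast; ring
    rw [e, Real.zero_rpow (ne_of_gt hα0), mul_zero]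
  have hterm : ∀ i ∈ Finset.range M,
      cB α (n + M + 1) n (n + 1 + i) *
        ((((n + M + 1 : ℕ) : ℝ) - ((n + 1 + i : ℕ) : ℝ)) * Δt) ^ α
      = ((g i - g (i + 1)) * ((M : ℝ) - (i : ℝ)) ^ α) * Δt ^ α := by
    intro i hi
    have hiM : i < M := Finset.mem_range.mp hi
    have hne : n + 1 + i ≠ n + M + 1 := by omega
    have e1 : ((n + 1 + i : ℕ) : ℝ) - n = (i : ℝ) + 1 := by push_cast; ring
    have e2 : ((n + 1 + i : ℕ) : ℝ) + 1 - n = (i : ℝ) + 1 + 1 := by push_cast; ring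
    have e3 : ((n + 1 + i : ℕ) : ℝ) - 1 - n = (i : ℝ) := by push_cast; ring
    have e4 : ((n + M + 1 : ℕ) : ℝ) - ((n + 1 + i : ℕ) : ℝ) = (M : ℝ) - (i : ℝ) := by
      push_cast; ring
    have hMi : (0 : ℝ) ≤ (M : ℝ) - (i : ℝ) := by
      have : (i : ℝ) ≤ (M : ℝ) := by exact_mod_cast hiM.le
      linarith
    rw [cB, if_neg hne, e1, e2, e3, e4, Real.mul_rpow hMi hΔt.le]
    have hgi : g i - g (i + 1) =
        2 * ((i : ℝ) + 1) ^ (1 - α) - ((i : ℝ) + 1 + 1) ^ (1 - α) - (i : ℝ) ^ (1 - α) := by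
      simp only [hg]
      push_cast
      ring
    rw [hgi]
    ring
  rw [Finset.sum_congr rfl hterm, htop, add_zero]
  have hwn : (((n + M + 1 : ℕ) : ℝ) - (n : ℝ)) * Δt = ((M : ℝ) + 1) * Δt := by
    push_cast; ring
  rw [hwn]
  have hM1 : (0 : ℝ) ≤ (M : ℝ) + 1 := by positivity
  rw [Real.mul_rpow hM1 hΔt.le, ← Finset.sum_mul, ← sub_mul, mul_inv]
  set S : ℝ := ∑ i ∈ Finset.range M, (g i - g (i + 1)) * ((M : ℝ) - (i : ℝ)) ^ α with hS
  set A : ℝ := ((M : ℝ) + 1) ^ α with hA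
  have hApos : (0 : ℝ) < A := Real.rpow_pos_of_pos (by positivity) α
  have hcancel : (Real.Gamma (2 - α))⁻¹ * (Δt ^ α)⁻¹ * ((A - S) * Δt ^ α)
      = (A - S) / Real.Gamma (2 - α) := by
    have hc2 : (Δt ^ α)⁻¹ * Δt ^ α = 1 := inv_mul_cancel₀ hD.ne'
    calc (Real.Gamma (2 - α))⁻¹ * (Δt ^ α)⁻¹ * ((A - S) * Δt ^ α)
        = ((A - S) * (Real.Gamma (2 - α))⁻¹) * ((Δt ^ α)⁻¹ * Δt ^ α) := by ring
      _ = (A - S) / Real.Gamma (2 - α) := by rw [hc2, mul_one, div_eq_mul_inv]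
  rw [hcancel]
  -- main inequality: α(1-α) ≤ A - S
  have hgnn : ∀ i : ℕ, 0 ≤ g i - g (i + 1) := by
    intro i
    have hcon := conc_aux ⟨hα0, hα1⟩ (Nat.cast_nonneg i : (0 : ℝ) ≤ (i : ℝ))
    have hgi : g i - g (i + 1) =
        2 * ((i : ℝ) + 1) ^ (1 - α) - ((i : ℝ) + 1 + 1) ^ (1 - α) - (i : ℝ) ^ (1 - α) := by
      simp only [hg]; push_cast; ring
    rw [hgi, show ((i : ℝ) + 1 + 1) = (i : ℝ) + 2 by ring]
    linarith
  have hSle : S ≤ (1 - g M) * A := by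
    have h1 : S ≤ ∑ i ∈ Finset.range M, (g i - g (i + 1)) * A := by
      rw [hS]
      apply Finset.sum_le_sum
      intro i hi
      have hiM : i < M := Finset.mem_range.mp hi
      have hle : ((M : ℝ) - (i : ℝ)) ^ α ≤ A := by
        rw [hA]
        apply Real.rpow_le_rpow
        · have : (i : ℝ) ≤ (M : ℝ) := by exact_mod_cast hiM.le
          linarith
        · have : (0 : ℝ) ≤ (i : ℝ) := Nat.cast_nonneg i
          linarith
        · exact hα0.le
      exact mul_le_mul_of_nonneg_left hle (hgnn i)
    have h2 : ∑ i ∈ Finset.range M, (g i - g (i + 1)) * A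
        = (∑ i ∈ Finset.range M, (g i - g (i + 1))) * A := (Finset.sum_mul _ _ _).symm
    have h3 : ∑ i ∈ Finset.range M, (g i - g (i + 1)) = g 0 - g M :=
      Finset.sum_range_sub' g M
    have h4 : g 0 = 1 := by
      simp only [hg]
      rw [Nat.cast_zero, Real.zero_rpow (by linarith : (1 : ℝ) - α ≠ 0), zero_add,
        Real.one_rpow, sub_zero]
    rw [h2, h3, h4] at h1
    exact h1
  have hinv : ((M : ℝ) + 1) ^ (-α) * A = 1 := by
    rw [hA, ← Real.rpow_add (by positivity : (0 : ℝ) < (M : ℝ) + 1)]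
    norm_num
  have hgM : (1 - α) * ((M : ℝ) + 1) ^ (-α) ≤ g M := by
    have hb := bern_aux ⟨hα0, hα1⟩ (by linarith [Nat.cast_nonneg (α := ℝ) M] :
      (1 : ℝ) ≤ (M : ℝ) + 1)
    rw [show (M : ℝ) + 1 - 1 = (M : ℝ) by ring] at hb
    simpa [hg] using hb
  have h2 : (1 - α) ≤ g M * A := by
    calc (1 - α) = (1 - α) * (((M : ℝ) + 1) ^ (-α) * A) := by rw [hinv, mul_one]
      _ = ((1 - α) * ((M : ℝ) + 1) ^ (-α)) * A := by ring
      _ ≤ g M * A := mul_le_mul_of_nonneg_right hgM hApos.le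
  have hmain : α * (1 - α) ≤ A - S := by
    nlinarith [hSle, h2, hApos, sq_nonneg (1 - α)]
  gcongr
end
end
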